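/- arXiv:2107.12971 — 4 statements merged into one kernel-verified Lean document; each statement's English description precedes it below -/
import Mathlib

section
/- Let d ≥ 1 and a > 0. There exists a constant C = C(d,a) > 0 such that for every integer r ≥ 2, every real ν > 0, and every x ∈ ℤ^d with ‖x‖_∞ ≤ r/2, one has ∑_{u ∈ ℤ^d, u ≠ 0} ‖x + r·u‖_∞^{a−d} · exp(−ν‖x + r·u‖_∞) ≤ C · ν^{−a} · r^{−d} · exp(−νr/4). -/
open Real Finset

lemma lemA (p : ℝ) (hp : 0 ≤ p) : ∃ M : ℝ, 0 < M ∧ ∀ x : ℝ, 0 ≤ x → x ^ p ≤ M * Real.exp x := by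
  refine ⟨1 + (Nat.ceil p).factorial, by positivity, fun x hx => ?_⟩
  set m := Nat.ceil p with hm
  have hf : (1:ℝ) ≤ m.factorial := Nat.one_le_cast.mpr (Nat.one_le_iff_ne_zero.mpr (Nat.factorial_ne_zero m))
  have he : (1:ℝ) ≤ Real.exp x := Real.one_le_exp hx
  have he0 : (0:ℝ) < Real.exp x := Real.exp_pos x
  rcases le_or_gt x 1 with h1 | h1
  · have : x ^ p ≤ 1 := Real.rpow_le_one hx h1 hp
    nlinarith
  · have h2 : x ^ p ≤ x ^ (m : ℝ) :=
      Real.rpow_le_rpow_of_exponent_le h1.le (Nat.le_ceil p)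
    have h3 : x ^ (m:ℝ) = x ^ (m:ℕ) := Real.rpow_natCast x m
    have h4 : x ^ (m:ℕ) / m.factorial ≤ Real.exp x := Real.pow_div_factorial_le_exp x hx m
    rw [div_le_iff₀ (by positivity)] at h4
    nlinarith

lemma lemG (c : ℝ) (hc : 0 < c) : Summable (fun j : ℕ => Real.exp (-c * (j+1))) ∧ ∑' j : ℕ, Real.exp (-c*(j+1)) ≤ 1/c := by
  have hρ0 : (0:ℝ) ≤ Real.exp (-c) := (Real.exp_pos _).le
  have hρ1 : Real.exp (-c) < 1 := Real.exp_lt_one_iff.mpr (by linarith)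
  have hrw : ∀ j : ℕ, Real.exp (-c * (j+1)) = Real.exp (-c) * Real.exp (-c) ^ j := by
    intro j
    rw [← Real.exp_nat_mul, ← Real.exp_add]
    ring_nf
  have hs : Summable (fun j : ℕ => Real.exp (-c) * Real.exp (-c) ^ j) :=
    (summable_geometric_of_lt_one hρ0 hρ1).mul_left _
  constructor
  · exact hs.congr (fun j => (hrw j).symm)
  · have : ∑' j : ℕ, Real.exp (-c*(j+1)) = Real.exp (-c) * (1 - Real.exp (-c))⁻¹ := by
      rw [tsum_congr hrw, tsum_mul_left, tsum_geometric_of_lt_one hρ0 hρ1]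
    rw [this]
    have key : c * Real.exp (-c) ≤ 1 - Real.exp (-c) := by
      have h1 := Real.add_one_le_exp c
      have h2 : Real.exp (-c) * Real.exp c = 1 := by rw [← Real.exp_add]; simp
      nlinarith [Real.exp_pos (-c), Real.exp_pos c]
    rw [← div_eq_mul_inv, div_le_div_iff₀ (by linarith) hc]
    linarith

lemma lemBern {b t : ℝ} (hb0 : 0 < b) (hb1 : b ≤ 1) (ht0 : 0 ≤ t) (ht1 : t ≤ 1) :
    (1 - t) ^ b ≤ 1 - b * t := by
  have := rpow_one_add_le_one_add_mul_self (s := -t) (by linarith) hb0.le hb1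
  simpa [sub_eq_add_neg, mul_neg] using this

lemma lemStep {b : ℝ} (hb : 0 < b) (hb1 : b ≤ 1) (j : ℕ) :
    b * ((j:ℝ)+1) ^ (b-1) ≤ ((j:ℝ)+1) ^ b - (j:ℝ) ^ b := by
  have hj1 : (0:ℝ) < (j:ℝ) + 1 := by positivity
  have ht0 : (0:ℝ) ≤ 1/((j:ℝ)+1) := by positivity
  have ht1 : 1/((j:ℝ)+1) ≤ 1 := by
    rw [div_le_one hj1]; linarith [Nat.cast_nonneg (α := ℝ) j]
  have hbern := lemBern hb hb1 ht0 ht1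
  have hfac : (j:ℝ) = ((j:ℝ)+1) * (1 - 1/((j:ℝ)+1)) := by field_simp; ring
  have h1 : (j:ℝ) ^ b = ((j:ℝ)+1) ^ b * (1 - 1/((j:ℝ)+1)) ^ b := by
    conv_lhs => rw [hfac]
    rw [Real.mul_rpow hj1.le (by linarith)]
  have h2 : ((j:ℝ)+1) ^ b * (1 - 1/((j:ℝ)+1)) ^ b ≤
      ((j:ℝ)+1) ^ b * (1 - b * (1/((j:ℝ)+1))) := by
    exact mul_le_mul_of_nonneg_left hbern (Real.rpow_nonneg hj1.le b)
  have h3 : ((j:ℝ)+1) ^ b * (1/((j:ℝ)+1)) = ((j:ℝ)+1) ^ (b-1) := by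
    rw [Real.rpow_sub_one hj1.ne' b]; ring
  nlinarith [h1, h2, h3]

set_option maxHeartbeats 1000000 in
lemma lemB (b : ℝ) (hb : 0 < b) : ∃ K : ℝ, 0 < K ∧ ∀ c : ℝ, 0 < c →
    Summable (fun j : ℕ => ((j:ℝ)+1) ^ (b-1) * Real.exp (-c * ((j:ℝ)+1))) ∧
    ∑' j : ℕ, ((j:ℝ)+1) ^ (b-1) * Real.exp (-c * ((j:ℝ)+1)) ≤ K * c ^ (-b) := by
  have h2cb : ∀ c : ℝ, 0 < c → (2/c) ^ b = 2 ^ b * c ^ (-b) := by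
    intro c hc
    rw [Real.div_rpow (by norm_num) hc.le, Real.rpow_neg hc.le, div_eq_mul_inv]
  rcases le_or_gt 1 b with hb1 | hb1
  · -- case b ≥ 1
    obtain ⟨M, hM, hMle⟩ := lemA (b-1) (by linarith)
    refine ⟨M * 2 ^ b, by positivity, fun c hc => ?_⟩
    obtain ⟨hgs, hgt⟩ := lemG (c/2) (by positivity)
    have hmaj : ∀ j : ℕ, ((j:ℝ)+1) ^ (b-1) * Real.exp (-c * ((j:ℝ)+1)) ≤
        M * (2/c) ^ (b-1) * Real.exp (-(c/2) * ((j:ℝ)+1)) := by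
      intro j
      have hj1 : (0:ℝ) < (j:ℝ) + 1 := by positivity
      have hfac : ((j:ℝ)+1) = (c * ((j:ℝ)+1) / 2) * (2/c) := by field_simp
      have h1 : ((j:ℝ)+1) ^ (b-1) = (c * ((j:ℝ)+1) / 2) ^ (b-1) * (2/c) ^ (b-1) := by
        rw [← Real.mul_rpow (by positivity) (by positivity), ← hfac]
      have h2 : (c * ((j:ℝ)+1) / 2) ^ (b-1) ≤ M * Real.exp (c * ((j:ℝ)+1) / 2) :=
        hMle _ (by positivity)
      have h3 : Real.exp (c * ((j:ℝ)+1) / 2) * Real.exp (-c * ((j:ℝ)+1)) =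
          Real.exp (-(c/2) * ((j:ℝ)+1)) := by
        rw [← Real.exp_add]; ring_nf
      calc ((j:ℝ)+1) ^ (b-1) * Real.exp (-c * ((j:ℝ)+1))
          = (c * ((j:ℝ)+1) / 2) ^ (b-1) * (2/c) ^ (b-1) * Real.exp (-c * ((j:ℝ)+1)) := by
            rw [h1]
        _ ≤ M * Real.exp (c * ((j:ℝ)+1) / 2) * (2/c) ^ (b-1) * Real.exp (-c * ((j:ℝ)+1)) := by
            have hB : (0:ℝ) ≤ (2/c) ^ (b-1) := Real.rpow_nonneg (by positivity) _
            exact mul_le_mul_of_nonneg_right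
              (mul_le_mul_of_nonneg_right h2 hB) (Real.exp_pos _).le
        _ = M * (2/c) ^ (b-1) * (Real.exp (c * ((j:ℝ)+1) / 2) * Real.exp (-c * ((j:ℝ)+1))) := by
            ring
        _ = M * (2/c) ^ (b-1) * Real.exp (-(c/2) * ((j:ℝ)+1)) := by rw [h3]
    have hnn : ∀ j : ℕ, 0 ≤ ((j:ℝ)+1) ^ (b-1) * Real.exp (-c * ((j:ℝ)+1)) := by
      intro j; positivity
    have hsum : Summable (fun j : ℕ => ((j:ℝ)+1) ^ (b-1) * Real.exp (-c * ((j:ℝ)+1))) :=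
      Summable.of_nonneg_of_le hnn hmaj ((hgs.mul_left _))
    refine ⟨hsum, ?_⟩
    have h4 : ∑' j : ℕ, ((j:ℝ)+1) ^ (b-1) * Real.exp (-c * ((j:ℝ)+1)) ≤
        ∑' j : ℕ, M * (2/c) ^ (b-1) * Real.exp (-(c/2) * ((j:ℝ)+1)) :=
      Summable.tsum_le_tsum hmaj hsum (hgs.mul_left _)
    rw [tsum_mul_left] at h4
    have h5 : M * (2/c) ^ (b-1) * (∑' j : ℕ, Real.exp (-(c/2) * ((j:ℝ)+1))) ≤
        M * (2/c) ^ (b-1) * (2/c) := by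
      have : (0:ℝ) ≤ M * (2/c) ^ (b-1) := by positivity
      have h6 : (1:ℝ)/(c/2) = 2/c := by field_simp
      exact mul_le_mul_of_nonneg_left (hgt.trans_eq h6) this
    have h7 : M * (2/c) ^ (b-1) * (2/c) = M * (2/c) ^ b := by
      rw [show b = (b-1) + 1 by ring, Real.rpow_add (by positivity), Real.rpow_one]
      ring_nf
    calc ∑' j : ℕ, ((j:ℝ)+1) ^ (b-1) * Real.exp (-c * ((j:ℝ)+1))
        ≤ M * (2/c) ^ (b-1) * (2/c) := le_trans h4 h5
      _ = M * (2/c) ^ b := h7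
      _ = M * 2 ^ b * c ^ (-b) := by rw [h2cb c hc]; ring
  · -- case b < 1
    refine ⟨2 ^ b / b + 1, by positivity, fun c hc => ?_⟩
    obtain ⟨hgs, hgt⟩ := lemG c hc
    have hble : ∀ j : ℕ, ((j:ℝ)+1) ^ (b-1) ≤ 1 := fun j =>
      Real.rpow_le_one_of_one_le_of_nonpos (by push_cast; linarith [Nat.cast_nonneg (α := ℝ) j]) (by linarith)
    have hnn : ∀ j : ℕ, 0 ≤ ((j:ℝ)+1) ^ (b-1) * Real.exp (-c * ((j:ℝ)+1)) := by
      intro j; positivity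
    have hmaj : ∀ j : ℕ, ((j:ℝ)+1) ^ (b-1) * Real.exp (-c * ((j:ℝ)+1)) ≤
        Real.exp (-c * ((j:ℝ)+1)) := by
      intro j
      have := Real.exp_pos (-c * ((j:ℝ)+1))
      nlinarith [hble j, Real.rpow_nonneg (show (0:ℝ) ≤ (j:ℝ)+1 by positivity) (b-1)]
    have hsum : Summable (fun j : ℕ => ((j:ℝ)+1) ^ (b-1) * Real.exp (-c * ((j:ℝ)+1))) :=
      Summable.of_nonneg_of_le hnn hmaj hgs
    refine ⟨hsum, ?_⟩
    have hcbpos : (0:ℝ) < c ^ (-b) := Real.rpow_pos_of_pos hc _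
    rcases le_or_gt 1 c with hc1 | hc1
    · have h1 : ∑' j : ℕ, ((j:ℝ)+1) ^ (b-1) * Real.exp (-c * ((j:ℝ)+1)) ≤
          ∑' j : ℕ, Real.exp (-c * ((j:ℝ)+1)) := Summable.tsum_le_tsum hmaj hsum hgs
      have h2 : (1:ℝ)/c ≤ c ^ (-b) := by
        have : (1:ℝ)/c = c ^ (-1:ℝ) := by
          rw [Real.rpow_neg_one]; exact (one_div c)
        rw [this]
        exact Real.rpow_le_rpow_of_exponent_le hc1 (by linarith)
      calc ∑' j : ℕ, ((j:ℝ)+1) ^ (b-1) * Real.exp (-c * ((j:ℝ)+1))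
          ≤ 1/c := le_trans h1 hgt
        _ ≤ c ^ (-b) := h2
        _ ≤ (2 ^ b / b + 1) * c ^ (-b) := by
            nlinarith [hcbpos, div_pos (Real.rpow_pos_of_pos two_pos b) hb]
    · -- c < 1
      set N := Nat.ceil (1/c) with hN
      have hcinv : (1:ℝ) ≤ 1/c := by rw [le_div_iff₀ hc]; linarith
      have hN1 : (1:ℝ)/c ≤ N := Nat.le_ceil _
      have hNpos : (0:ℝ) < N := lt_of_lt_of_le (by linarith) hN1
      have hN2 : (N:ℝ) ≤ 2/c := by
        have := Nat.ceil_lt_add_one (show (0:ℝ) ≤ 1/c by positivity)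
        have h2c : 1/c + 1 ≤ 2/c := by
          rw [div_add' _ _ _ hc.ne', div_le_div_iff₀ hc hc]
          nlinarith
        calc (N:ℝ) ≤ 1/c + 1 := this.le
          _ ≤ 2/c := h2c
      rw [← hsum.sum_add_tsum_nat_add N]
      -- head bound
      have hhead : ∑ j ∈ Finset.range N, ((j:ℝ)+1) ^ (b-1) * Real.exp (-c * ((j:ℝ)+1)) ≤
          (2 ^ b / b) * c ^ (-b) := by
        have hper : ∀ j ∈ Finset.range N, ((j:ℝ)+1) ^ (b-1) * Real.exp (-c * ((j:ℝ)+1)) ≤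
            (1/b) * (((j:ℝ)+1) ^ b - (j:ℝ) ^ b) := by
          intro j _
          have he1 : Real.exp (-c * ((j:ℝ)+1)) ≤ 1 :=
            Real.exp_le_one_iff.mpr (by nlinarith [Nat.cast_nonneg (α := ℝ) j])
          have hp : (0:ℝ) ≤ ((j:ℝ)+1) ^ (b-1) := Real.rpow_nonneg (by positivity) _
          have := lemStep hb hb1.le j
          calc ((j:ℝ)+1) ^ (b-1) * Real.exp (-c * ((j:ℝ)+1)) ≤ ((j:ℝ)+1) ^ (b-1) := by
                nlinarith [Real.exp_pos (-c * ((j:ℝ)+1))]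
            _ ≤ (1/b) * (((j:ℝ)+1) ^ b - (j:ℝ) ^ b) := by
                have h9 : ((j:ℝ)+1) ^ (b-1) = (1/b) * (b * ((j:ℝ)+1) ^ (b-1)) := by
                  field_simp
                rw [h9]
                exact mul_le_mul_of_nonneg_left this (by positivity)
        have htel : ∑ j ∈ Finset.range N, (((j:ℝ)+1) ^ b - (j:ℝ) ^ b) = (N:ℝ) ^ b := by
          have := Finset.sum_range_sub (fun j : ℕ => (j:ℝ) ^ b) N
          simp only [Nat.cast_add, Nat.cast_one] at this
          rw [this]
          simp [Real.zero_rpow hb.ne']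
        calc ∑ j ∈ Finset.range N, ((j:ℝ)+1) ^ (b-1) * Real.exp (-c * ((j:ℝ)+1))
            ≤ ∑ j ∈ Finset.range N, (1/b) * (((j:ℝ)+1) ^ b - (j:ℝ) ^ b) :=
              Finset.sum_le_sum hper
          _ = (1/b) * (N:ℝ) ^ b := by rw [← Finset.mul_sum, htel]
          _ ≤ (1/b) * (2/c) ^ b := by
              have : (N:ℝ) ^ b ≤ (2/c) ^ b := Real.rpow_le_rpow hNpos.le hN2 hb.le
              have hbinv : (0:ℝ) ≤ 1/b := by positivity
              nlinarith
          _ = (2 ^ b / b) * c ^ (-b) := by rw [h2cb c hc]; ring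
      -- tail bound
      have htail : ∑' i : ℕ, (((i+N:ℕ):ℝ)+1) ^ (b-1) * Real.exp (-c * (((i+N:ℕ):ℝ)+1)) ≤
          c ^ (-b) := by
        have htmaj : ∀ i : ℕ, (((i+N:ℕ):ℝ)+1) ^ (b-1) * Real.exp (-c * (((i+N:ℕ):ℝ)+1)) ≤
            (N:ℝ) ^ (b-1) * Real.exp (-c * ((i:ℝ)+1)) := by
          intro i
          push_cast
          have h1 : ((i:ℝ)+(N:ℝ)+1) ^ (b-1) ≤ (N:ℝ) ^ (b-1) :=
            Real.rpow_le_rpow_of_nonpos hNpos (by linarith [Nat.cast_nonneg (α := ℝ) i]) (by linarith)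
          have h2 : Real.exp (-c * ((i:ℝ)+(N:ℝ)+1)) ≤ Real.exp (-c * ((i:ℝ)+1)) := by
            apply Real.exp_le_exp.mpr
            nlinarith
          have h3 : (0:ℝ) ≤ ((i:ℝ)+(N:ℝ)+1) ^ (b-1) := Real.rpow_nonneg (by positivity) _
          nlinarith [Real.exp_pos (-c * ((i:ℝ)+(N:ℝ)+1)), Real.rpow_nonneg hNpos.le (b-1)]
        have hts : Summable (fun i : ℕ => (((i+N:ℕ):ℝ)+1) ^ (b-1) * Real.exp (-c * (((i+N:ℕ):ℝ)+1))) :=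
          (summable_nat_add_iff N).mpr hsum
        have h4 : ∑' i : ℕ, (((i+N:ℕ):ℝ)+1) ^ (b-1) * Real.exp (-c * (((i+N:ℕ):ℝ)+1)) ≤
            ∑' i : ℕ, (N:ℝ) ^ (b-1) * Real.exp (-c * ((i:ℝ)+1)) :=
          Summable.tsum_le_tsum htmaj hts (hgs.mul_left _)
        rw [tsum_mul_left] at h4
        have h5 : (N:ℝ) ^ (b-1) * (∑' i : ℕ, Real.exp (-c * ((i:ℝ)+1))) ≤
            (N:ℝ) ^ (b-1) * (1/c) := by
          exact mul_le_mul_of_nonneg_left hgt (Real.rpow_nonneg hNpos.le _)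
        have h6 : (N:ℝ) ^ (b-1) ≤ (1/c) ^ (b-1) :=
          Real.rpow_le_rpow_of_nonpos (by positivity) hN1 (by linarith)
        have h7 : ((1:ℝ)/c) ^ (b-1) * (1/c) = c ^ (-b) := by
          have e1 : ((1:ℝ)/c) ^ (b-1) * (1/c) = ((1:ℝ)/c) ^ b := by
            rw [show b = (b-1)+1 by ring, Real.rpow_add (by positivity), Real.rpow_one]
            ring_nf
          rw [e1, one_div, Real.inv_rpow hc.le, ← Real.rpow_neg hc.le]
        have h8 : ((1:ℝ)/c) * (N:ℝ) ^ (b-1) ≤ ((1:ℝ)/c) * ((1:ℝ)/c) ^ (b-1) :=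
          mul_le_mul_of_nonneg_left h6 (by positivity)
        calc ∑' i : ℕ, (((i+N:ℕ):ℝ)+1) ^ (b-1) * Real.exp (-c * (((i+N:ℕ):ℝ)+1))
            ≤ (N:ℝ) ^ (b-1) * (1/c) := le_trans h4 h5
          _ ≤ ((1:ℝ)/c) ^ (b-1) * (1/c) := by linarith [h8]
          _ = c ^ (-b) := h7
      calc (∑ j ∈ Finset.range N, ((j:ℝ)+1) ^ (b-1) * Real.exp (-c * ((j:ℝ)+1))) +
            ∑' i : ℕ, (((i+N:ℕ):ℝ)+1) ^ (b-1) * Real.exp (-c * (((i+N:ℕ):ℝ)+1))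
          ≤ (2 ^ b / b) * c ^ (-b) + c ^ (-b) := add_le_add hhead htail
        _ = (2 ^ b / b + 1) * c ^ (-b) := by ring


lemma lemPow (d : ℕ) (x y : ℝ) (hy : 0 ≤ y) (hxy : y ≤ x) :
    x ^ (d+1) - y ^ (d+1) ≤ (d+1) * x ^ d * (x - y) := by
  induction d with
  | zero => simp
  | succ e ih =>
    have hyx : y ^ (e+1) ≤ x ^ (e+1) := pow_le_pow_left₀ hy hxy _
    have hx : 0 ≤ x := hy.trans hxy
    have hxp : 0 ≤ x ^ e := pow_nonneg hx e
    have h2 : x * (x ^ (e+1) - y ^ (e+1)) ≤ ((e:ℝ)+1) * x ^ (e+1) * (x - y) := by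
      calc x * (x ^ (e+1) - y ^ (e+1)) ≤ x * (((e:ℝ)+1) * x ^ e * (x - y)) :=
            mul_le_mul_of_nonneg_left ih hx
        _ = ((e:ℝ)+1) * x ^ (e+1) * (x - y) := by ring
    have h3 : y ^ (e+1) * (x - y) ≤ x ^ (e+1) * (x - y) :=
      mul_le_mul_of_nonneg_right hyx (by linarith)
    calc x ^ (e+1+1) - y ^ (e+1+1) = x * (x ^ (e+1) - y ^ (e+1)) + y ^ (e+1) * (x - y) := by
          ring
      _ ≤ ((e:ℝ)+1) * x ^ (e+1) * (x - y) + x ^ (e+1) * (x - y) := add_le_add h2 h3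
      _ = (↑(e+1) + 1) * x ^ (e+1) * (x - y) := by push_cast; ring

section Norm

variable {d : ℕ}

/-- sup-norm as a natural number -/
def mfun (v : Fin d → ℤ) : ℕ := Finset.univ.sup fun i => (v i).natAbs

lemma coordNorm (k : ℤ) : ‖k‖ = (k.natAbs : ℝ) := by
  rw [Int.norm_eq_abs, Nat.cast_natAbs]
  exact Int.cast_abs.symm

lemma lemNorm (hd : 1 ≤ d) (v : Fin d → ℤ) : ‖v‖ = (mfun v : ℝ) := by
  haveI : Nonempty (Fin d) := Fin.pos_iff_nonempty.mp hd
  apply le_antisymm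
  · apply (pi_norm_le_iff_of_nonneg (by positivity)).mpr
    intro i
    rw [coordNorm]
    have h : (v i).natAbs ≤ mfun v := Finset.le_sup (f := fun i => (v i).natAbs) (Finset.mem_univ i)
    exact Nat.cast_le.mpr h
  · obtain ⟨i0, _, hi0⟩ := Finset.exists_mem_eq_sup Finset.univ Finset.univ_nonempty
      (fun i => (v i).natAbs)
    calc (mfun v : ℝ) = ‖v i0‖ := by rw [coordNorm, mfun, hi0]
      _ ≤ ‖v‖ := norm_le_pi_norm v i0

lemma lemAttain (hd : 1 ≤ d) (v : Fin d → ℤ) : ∃ i, ‖v i‖ = ‖v‖ := by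
  haveI : Nonempty (Fin d) := Fin.pos_iff_nonempty.mp hd
  obtain ⟨i0, _, hi0⟩ := Finset.exists_mem_eq_sup Finset.univ Finset.univ_nonempty
    (fun i => (v i).natAbs)
  exact ⟨i0, by rw [coordNorm, lemNorm hd, mfun, hi0]⟩

lemma lemOne (hd : 1 ≤ d) (v : Fin d → ℤ) (hv : v ≠ 0) : (1:ℝ) ≤ ‖v‖ := by
  obtain ⟨i, hi⟩ := Function.ne_iff.mp hv
  calc (1:ℝ) ≤ ‖v i‖ := by
        rw [coordNorm]
        exact_mod_cast Nat.one_le_cast.mpr (Int.natAbs_pos.mpr hi)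
    _ ≤ ‖v‖ := norm_le_pi_norm v i

/-- boxes -/
noncomputable def boxF (d n : ℕ) : Finset (Fin d → ℤ) := Fintype.piFinset fun _ => Finset.Icc (-(n:ℤ)) (n:ℤ)

lemma mem_boxF {n : ℕ} {v : Fin d → ℤ} : v ∈ boxF d n ↔ mfun v ≤ n := by
  rw [boxF, Fintype.mem_piFinset, mfun]
  constructor
  · intro h
    apply Finset.sup_le
    intro i _
    have := h i
    rw [Finset.mem_Icc] at this
    omega
  · intro h i
    have h1 : (v i).natAbs ≤ Finset.univ.sup fun i => (v i).natAbs :=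
      Finset.le_sup (f := fun i => (v i).natAbs) (Finset.mem_univ i)
    have : (v i).natAbs ≤ n := le_trans h1 h
    rw [Finset.mem_Icc]
    omega

lemma boxF_subset {n m : ℕ} (h : n ≤ m) : boxF d n ⊆ boxF d m := by
  intro v hv
  rw [mem_boxF] at *
  omega

lemma card_boxF (n : ℕ) : (boxF d n).card = (2*n+1)^d := by
  rw [boxF, Fintype.card_piFinset]
  have : (Finset.Icc (-(n:ℤ)) (n:ℤ)).card = 2*n+1 := by
    rw [Int.card_Icc]
    have : ((n:ℤ) + 1 - (-(n:ℤ))) = ((2*n+1 : ℕ) : ℤ) := by push_cast; ring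
    rw [this, Int.toNat_natCast]
  simp [this]

end Norm

lemma lemC (d : ℕ) (hd : 1 ≤ d) (a : ℝ) (ha : 0 < a) : ∃ K : ℝ, 0 < K ∧ ∀ c : ℝ, 0 < c →
    Summable (fun u : {u : Fin d → ℤ // u ≠ 0} =>
      ‖(u : Fin d → ℤ)‖ ^ (a - d) * Real.exp (-c * ‖(u : Fin d → ℤ)‖)) ∧
    ∑' u : {u : Fin d → ℤ // u ≠ 0},
      ‖(u : Fin d → ℤ)‖ ^ (a - d) * Real.exp (-c * ‖(u : Fin d → ℤ)‖) ≤ K * c ^ (-a) := by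
  obtain ⟨e, hde⟩ : ∃ e, d = e + 1 := ⟨d - 1, (Nat.succ_pred_eq_of_pos hd).symm⟩
  obtain ⟨K, hK, hKc⟩ := lemB a ha
  have hDpos : (0:ℝ) < 2 * d * 3 ^ e := by positivity
  refine ⟨2 * d * 3 ^ e * K, by positivity, fun c hc => ?_⟩
  set G : (Fin d → ℤ) → ℝ := fun v => ‖v‖ ^ (a - d) * Real.exp (-c * ‖v‖) with hG
  have hGnn : ∀ v, 0 ≤ G v := fun v =>
    mul_nonneg (Real.rpow_nonneg (norm_nonneg v) _) (Real.exp_pos _).le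
  -- value of G on a shell
  have hGval : ∀ n : ℕ, ∀ v ∈ boxF d (n+1) \ boxF d n,
      G v = ((n:ℝ)+1) ^ (a - d) * Real.exp (-c * ((n:ℝ)+1)) := by
    intro n v hv
    rw [Finset.mem_sdiff, mem_boxF, mem_boxF] at hv
    have hmv : mfun v = n + 1 := by omega
    rw [hG]
    simp only
    rw [lemNorm hd v, hmv]
    push_cast
    ring_nf
  -- shell cardinality bound (as reals)
  have hcard : ∀ n : ℕ, (((boxF d (n+1) \ boxF d n).card : ℝ)) ≤
      2 * d * 3 ^ e * ((n:ℝ)+1) ^ (e:ℕ) := by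
    intro n
    have hsub : boxF d n ⊆ boxF d (n+1) := boxF_subset (by omega)
    rw [Finset.card_sdiff_of_subset hsub, card_boxF, card_boxF]
    have hle : (2*n+1)^d ≤ (2*(n+1)+1)^d := Nat.pow_le_pow_left (by omega) d
    rw [Nat.cast_sub hle, hde]
    push_cast
    have h1 : ((2*((n:ℝ)+1)+1)) ^ (e+1) - (2*(n:ℝ)+1) ^ (e+1) ≤
        ((e:ℝ)+1) * (2*((n:ℝ)+1)+1) ^ e * ((2*((n:ℝ)+1)+1) - (2*(n:ℝ)+1)) :=
      lemPow e _ _ (by positivity) (by linarith)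
    have h2 : (2*((n:ℝ)+1)+1) ^ e ≤ (3*((n:ℝ)+1)) ^ e :=
      pow_le_pow_left₀ (by positivity) (by linarith) e
    have h3 : (3*((n:ℝ)+1)) ^ e = 3 ^ e * ((n:ℝ)+1) ^ e := mul_pow 3 _ e
    have h4 : (0:ℝ) ≤ ((n:ℝ)+1) ^ e := by positivity
    nlinarith [pow_nonneg (show (0:ℝ) ≤ 2*((n:ℝ)+1)+1 by positivity) e]
  -- shell sum bound
  have hshell : ∀ n : ℕ, ∑ v ∈ boxF d (n+1) \ boxF d n, G v ≤
      2 * d * 3 ^ e * (((n:ℝ)+1) ^ (a-1) * Real.exp (-c * ((n:ℝ)+1))) := by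
    intro n
    rw [Finset.sum_congr rfl (hGval n), Finset.sum_const, nsmul_eq_mul]
    have hnn : (0:ℝ) ≤ ((n:ℝ)+1) ^ (a - d) * Real.exp (-c * ((n:ℝ)+1)) :=
      mul_nonneg (Real.rpow_nonneg (by positivity) _) (Real.exp_pos _).le
    have key : ((n:ℝ)+1) ^ (e:ℕ) * (((n:ℝ)+1) ^ (a - d) * Real.exp (-c * ((n:ℝ)+1))) =
        ((n:ℝ)+1) ^ (a-1) * Real.exp (-c * ((n:ℝ)+1)) := by
      have h0 : ((n:ℝ)+1) ^ (e:ℕ) = ((n:ℝ)+1) ^ ((e:ℕ):ℝ) := (Real.rpow_natCast _ e).symm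
      have hexp : ((e:ℕ):ℝ) + (a - (d:ℕ)) = a - 1 := by rw [hde]; push_cast; ring
      rw [h0, ← mul_assoc, ← Real.rpow_add (by positivity), hexp]
    calc (((boxF d (n+1) \ boxF d n).card : ℝ)) * (((n:ℝ)+1) ^ (a - d) * Real.exp (-c * ((n:ℝ)+1)))
        ≤ (2 * d * 3 ^ e * ((n:ℝ)+1) ^ (e:ℕ)) * (((n:ℝ)+1) ^ (a - d) * Real.exp (-c * ((n:ℝ)+1))) :=
          mul_le_mul_of_nonneg_right (hcard n) hnn
      _ = 2 * d * 3 ^ e * (((n:ℝ)+1) ^ (a-1) * Real.exp (-c * ((n:ℝ)+1))) := by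
          rw [mul_assoc, key]
  obtain ⟨hBsum, hBt⟩ := hKc c hc
  -- partial sums
  have hpartial : ∀ F : Finset {u : Fin d → ℤ // u ≠ 0},
      ∑ u ∈ F, G (u : Fin d → ℤ) ≤ 2 * d * 3 ^ e * (K * c ^ (-a)) := by
    intro F
    have hinj : Set.InjOn Subtype.val (F : Set {u : Fin d → ℤ // u ≠ 0}) :=
      fun u _ v _ h => Subtype.ext h
    rw [← Finset.sum_image (fun u hu v hv h => hinj hu hv h)]
    set F' := F.image Subtype.val with hF'
    set N := F'.sup mfun with hNdef
    have hF'sub : F' ⊆ boxF d N \ boxF d 0 := by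
      intro v hv
      rw [Finset.mem_sdiff, mem_boxF, mem_boxF]
      constructor
      · exact Finset.le_sup hv
      · rw [hF', Finset.mem_image] at hv
        obtain ⟨u, _, rfl⟩ := hv
        have h1 := lemOne hd u.val u.2
        rw [lemNorm hd] at h1
        have : 1 ≤ mfun u.val := by exact_mod_cast h1
        omega
    have hsum0 : ∑ v ∈ F', G v ≤ ∑ v ∈ boxF d N \ boxF d 0, G v :=
      Finset.sum_le_sum_of_subset_of_nonneg hF'sub (fun v _ _ => hGnn v)
    -- telescoping
    have htel : ∑ v ∈ boxF d N \ boxF d 0, G v =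
        ∑ n ∈ Finset.range N, ∑ v ∈ boxF d (n+1) \ boxF d n, G v := by
      have h1 : ∀ n : ℕ, ∑ v ∈ boxF d (n+1) \ boxF d n, G v =
          (∑ v ∈ boxF d (n+1), G v) - ∑ v ∈ boxF d n, G v :=
        fun n => Finset.sum_sdiff_eq_sub (boxF_subset (by omega))
      have h2 : ∑ v ∈ boxF d N \ boxF d 0, G v =
          (∑ v ∈ boxF d N, G v) - ∑ v ∈ boxF d 0, G v :=
        Finset.sum_sdiff_eq_sub (boxF_subset (by omega))
      rw [h2]
      rw [Finset.sum_congr rfl (fun n _ => h1 n),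
        Finset.sum_range_sub (fun n => ∑ v ∈ boxF d n, G v)]
    have hbd : ∑ n ∈ Finset.range N, ∑ v ∈ boxF d (n+1) \ boxF d n, G v ≤
        2 * d * 3 ^ e * (K * c ^ (-a)) := by
      calc ∑ n ∈ Finset.range N, ∑ v ∈ boxF d (n+1) \ boxF d n, G v
          ≤ ∑ n ∈ Finset.range N,
            2 * d * 3 ^ e * (((n:ℝ)+1) ^ (a-1) * Real.exp (-c * ((n:ℝ)+1))) :=
            Finset.sum_le_sum (fun n _ => hshell n)
        _ = 2 * d * 3 ^ e * ∑ n ∈ Finset.range N,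
            (((n:ℝ)+1) ^ (a-1) * Real.exp (-c * ((n:ℝ)+1))) := by rw [Finset.mul_sum]
        _ ≤ 2 * d * 3 ^ e * (K * c ^ (-a)) := by
            apply mul_le_mul_of_nonneg_left _ hDpos.le
            calc ∑ n ∈ Finset.range N, (((n:ℝ)+1) ^ (a-1) * Real.exp (-c * ((n:ℝ)+1)))
                ≤ ∑' j : ℕ, ((j:ℝ)+1) ^ (a-1) * Real.exp (-c * ((j:ℝ)+1)) :=
                  Summable.sum_le_tsum (Finset.range N) (fun j _ =>
                    mul_nonneg (Real.rpow_nonneg (by positivity) _) (Real.exp_pos _).le) hBsum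
              _ ≤ K * c ^ (-a) := hBt
    calc ∑ v ∈ F', G v ≤ ∑ v ∈ boxF d N \ boxF d 0, G v := hsum0
      _ = _ := htel
      _ ≤ _ := hbd
  have hGnn' : 0 ≤ (fun u : {u : Fin d → ℤ // u ≠ 0} => G (u : Fin d → ℤ)) :=
    fun u => hGnn _
  have hpartial' : ∀ F : Finset {u : Fin d → ℤ // u ≠ 0},
      ∑ u ∈ F, G (u : Fin d → ℤ) ≤ 2 * d * 3 ^ e * K * c ^ (-a) :=
    fun F => (hpartial F).trans_eq (by ring)
  have hsumm : Summable (fun u : {u : Fin d → ℤ // u ≠ 0} => G (u : Fin d → ℤ)) :=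
    summable_of_sum_le hGnn' hpartial'
  exact ⟨hsumm, Summable.tsum_le_of_sum_le hsumm hpartial'⟩

set_option maxHeartbeats 1000000 in
theorem sum_translates_exp_decay (d : ℕ) (hd : 1 ≤ d) (a : ℝ) (ha : 0 < a) :
    ∃ C : ℝ, 0 < C ∧ ∀ r : ℤ, 2 ≤ r → ∀ ν : ℝ, 0 < ν →
      ∀ x : Fin d → ℤ, ‖x‖ ≤ (r : ℝ) / 2 →
      Summable (fun u : {u : Fin d → ℤ // u ≠ 0} =>
        ‖x + r • (u : Fin d → ℤ)‖ ^ (a - d) * Real.exp (-ν * ‖x + r • (u : Fin d → ℤ)‖)) ∧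
      ∑' u : {u : Fin d → ℤ // u ≠ 0},
          ‖x + r • (u : Fin d → ℤ)‖ ^ (a - d) * Real.exp (-ν * ‖x + r • (u : Fin d → ℤ)‖)
        ≤ C * ν ^ (-a) * (r : ℝ) ^ (-(d : ℝ)) * Real.exp (-ν * r / 4) := by
  obtain ⟨K, hK, hKc⟩ := lemC d hd a ha
  refine ⟨(2:ℝ) ^ (a + (d:ℝ)) * 4 ^ a * K, by positivity, ?_⟩
  intro r hr ν hν x hx
  have hr2 : (2:ℝ) ≤ (r:ℝ) := by exact_mod_cast hr
  have hrpos : (0:ℝ) < (r:ℝ) := by linarith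
  have hcpos : (0:ℝ) < ν * r / 4 := by positivity
  set c : ℝ := ν * r / 4 with hc
  obtain ⟨hGsum, hGt⟩ := hKc c hcpos
  set E : ℝ := (2:ℝ) ^ (a + (d:ℝ)) with hE
  have hEpos : 0 < E := Real.rpow_pos_of_pos two_pos _
  set D : ℝ := E * (r:ℝ) ^ (a - (d:ℝ)) * Real.exp (-ν * r / 4) with hD
  have hDpos : 0 < D := by
    apply mul_pos (mul_pos hEpos (Real.rpow_pos_of_pos hrpos _)) (Real.exp_pos _)
  have hpt : ∀ u : {u : Fin d → ℤ // u ≠ 0},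
      ‖x + r • (u : Fin d → ℤ)‖ ^ (a - (d:ℝ)) * Real.exp (-ν * ‖x + r • (u : Fin d → ℤ)‖) ≤
      D * (‖(u : Fin d → ℤ)‖ ^ (a - (d:ℝ)) * Real.exp (-c * ‖(u : Fin d → ℤ)‖)) := by
    intro u
    set N : ℝ := ‖(u : Fin d → ℤ)‖ with hN
    have hN1 : 1 ≤ N := lemOne hd u.1 u.2
    have hNpos : 0 < N := by linarith
    set v : Fin d → ℤ := x + r • (u : Fin d → ℤ) with hv
    set V : ℝ := ‖v‖ with hV
    have hsm : ‖r • (u : Fin d → ℤ)‖ = (r:ℝ) * N := by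
      have hnr : ‖r‖ = (r:ℝ) := by
        rw [Int.norm_eq_abs, abs_of_nonneg (by positivity)]
      apply le_antisymm
      · calc ‖r • (u : Fin d → ℤ)‖ ≤ ‖r‖ * ‖(u : Fin d → ℤ)‖ := norm_zsmul_le r _
          _ = (r:ℝ) * N := by rw [hnr]
      · obtain ⟨i, hi⟩ := lemAttain hd (u : Fin d → ℤ)
        calc (r:ℝ) * N = ‖(r • (u : Fin d → ℤ)) i‖ := by
              rw [Pi.smul_apply, smul_eq_mul, coordNorm, Int.natAbs_mul]
              push_cast
              rw [← coordNorm, ← coordNorm, hi, hnr]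
          _ ≤ ‖r • (u : Fin d → ℤ)‖ := norm_le_pi_norm _ i
    have hVlb : (r:ℝ) * N / 2 ≤ V := by
      have h0 : r • (u : Fin d → ℤ) = v - x := by rw [hv]; abel
      have h1 : ‖r • (u : Fin d → ℤ)‖ ≤ V + ‖x‖ := by
        rw [h0]; exact norm_sub_le _ _
      rw [hsm] at h1
      nlinarith [hx, hN1, hrpos]
    have hVub : V ≤ 2 * ((r:ℝ) * N) := by
      calc V ≤ ‖x‖ + ‖r • (u : Fin d → ℤ)‖ := norm_add_le _ _
        _ = ‖x‖ + (r:ℝ) * N := by rw [hsm]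
        _ ≤ 2 * ((r:ℝ) * N) := by nlinarith [hx, hN1, hrpos]
    have hVpos : (0:ℝ) < V := by nlinarith [hVlb, hrpos, hNpos]
    have hrNpos : (0:ℝ) < (r:ℝ) * N := by positivity
    have hT1 : V ^ (a - (d:ℝ)) ≤ E * ((r:ℝ) * N) ^ (a - (d:ℝ)) := by
      have hrNnn : (0:ℝ) ≤ ((r:ℝ)*N) ^ (a - (d:ℝ)) := Real.rpow_nonneg hrNpos.le _
      rcases le_or_gt 0 (a - (d:ℝ)) with had | had
      · calc V ^ (a - (d:ℝ)) ≤ (2*((r:ℝ)*N)) ^ (a - (d:ℝ)) :=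
              Real.rpow_le_rpow (norm_nonneg v) hVub had
          _ = 2 ^ (a - (d:ℝ)) * ((r:ℝ)*N) ^ (a - (d:ℝ)) :=
              Real.mul_rpow (by norm_num) hrNpos.le
          _ ≤ E * ((r:ℝ)*N) ^ (a - (d:ℝ)) := by
              apply mul_le_mul_of_nonneg_right _ hrNnn
              exact Real.rpow_le_rpow_of_exponent_le one_le_two
                (by have : (0:ℝ) ≤ (d:ℝ) := Nat.cast_nonneg d; linarith)
      · have hrN2 : (0:ℝ) < (r:ℝ)*N/2 := by positivity
        calc V ^ (a - (d:ℝ)) ≤ ((r:ℝ)*N/2) ^ (a - (d:ℝ)) :=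
              Real.rpow_le_rpow_of_nonpos hrN2 hVlb had.le
          _ = ((r:ℝ)*N) ^ (a - (d:ℝ)) / 2 ^ (a - (d:ℝ)) :=
              Real.div_rpow hrNpos.le (by norm_num : (0:ℝ) ≤ 2) _
          _ = ((r:ℝ)*N) ^ (a - (d:ℝ)) * 2 ^ (-(a - (d:ℝ))) := by
              rw [Real.rpow_neg (by norm_num), div_eq_mul_inv]
          _ ≤ ((r:ℝ)*N) ^ (a - (d:ℝ)) * E := by
              apply mul_le_mul_of_nonneg_left _ hrNnn
              exact Real.rpow_le_rpow_of_exponent_le one_le_two (by linarith)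
          _ = E * ((r:ℝ)*N) ^ (a - (d:ℝ)) := mul_comm _ _
    have hT2 : Real.exp (-ν * V) ≤ Real.exp (-ν * r / 4) * Real.exp (-c * N) := by
      rw [← Real.exp_add]
      apply Real.exp_le_exp.mpr
      rw [hc]
      nlinarith [mul_le_mul_of_nonneg_left hVlb hν.le,
        mul_nonneg (mul_nonneg hν.le hrpos.le) (sub_nonneg.mpr hN1)]
    calc V ^ (a - (d:ℝ)) * Real.exp (-ν * V)
        ≤ (E * ((r:ℝ)*N) ^ (a - (d:ℝ))) * (Real.exp (-ν * r / 4) * Real.exp (-c * N)) := by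
          apply mul_le_mul hT1 hT2 (Real.exp_pos _).le
          positivity
      _ = D * (N ^ (a - (d:ℝ)) * Real.exp (-c * N)) := by
          rw [hD, Real.mul_rpow hrpos.le hNpos.le]
          ring
  have hnn : ∀ u : {u : Fin d → ℤ // u ≠ 0},
      0 ≤ ‖x + r • (u : Fin d → ℤ)‖ ^ (a - (d:ℝ)) * Real.exp (-ν * ‖x + r • (u : Fin d → ℤ)‖) :=
    fun u => mul_nonneg (Real.rpow_nonneg (norm_nonneg _) _) (Real.exp_pos _).le
  have hsum : Summable (fun u : {u : Fin d → ℤ // u ≠ 0} =>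
      ‖x + r • (u : Fin d → ℤ)‖ ^ (a - (d:ℝ)) * Real.exp (-ν * ‖x + r • (u : Fin d → ℤ)‖)) :=
    Summable.of_nonneg_of_le hnn hpt (hGsum.mul_left D)
  refine ⟨hsum, ?_⟩
  have h44 : ((4:ℝ)⁻¹) ^ (-a) = 4 ^ a := by
    rw [Real.inv_rpow (by norm_num : (0:ℝ) ≤ 4), Real.rpow_neg (by norm_num : (0:ℝ) ≤ 4), inv_inv]
  have h1 : c ^ (-a) = ν ^ (-a) * (r:ℝ) ^ (-a) * 4 ^ a := by
    rw [hc, show ν * (r:ℝ) / 4 = ν * (r:ℝ) * (4:ℝ)⁻¹ by ring,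
      Real.mul_rpow (by positivity) (by norm_num), Real.mul_rpow hν.le hrpos.le, h44]
  have h2 : (r:ℝ) ^ (a - (d:ℝ)) * (r:ℝ) ^ (-a) = (r:ℝ) ^ (-(d:ℝ)) := by
    rw [← Real.rpow_add hrpos]; ring_nf
  calc ∑' u : {u : Fin d → ℤ // u ≠ 0},
        ‖x + r • (u : Fin d → ℤ)‖ ^ (a - (d:ℝ)) * Real.exp (-ν * ‖x + r • (u : Fin d → ℤ)‖)
      ≤ ∑' u : {u : Fin d → ℤ // u ≠ 0},
        D * (‖(u : Fin d → ℤ)‖ ^ (a - (d:ℝ)) * Real.exp (-c * ‖(u : Fin d → ℤ)‖)) :=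
        Summable.tsum_le_tsum hpt hsum (hGsum.mul_left D)
    _ = D * ∑' u : {u : Fin d → ℤ // u ≠ 0},
        (‖(u : Fin d → ℤ)‖ ^ (a - (d:ℝ)) * Real.exp (-c * ‖(u : Fin d → ℤ)‖)) := tsum_mul_left
    _ ≤ D * (K * c ^ (-a)) := mul_le_mul_of_nonneg_left hGt hDpos.le
    _ = (E * 4 ^ a * K) * ν ^ (-a) * ((r:ℝ) ^ (a - (d:ℝ)) * (r:ℝ) ^ (-a)) * Real.exp (-ν * r / 4) := by
        rw [hD, h1]; ring
    _ = (2:ℝ) ^ (a + (d:ℝ)) * 4 ^ a * K * ν ^ (-a) * (r:ℝ) ^ (-(d:ℝ)) * Real.exp (-ν * r / 4) := by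
        rw [h2, hE]
end

section
/- Let d ≥ 1 and let a, b > 0 satisfy a + b < d. There exists a constant C = C(d,a,b) > 0 such that for every x ∈ ℤ^d, ∑_{y ∈ ℤ^d} ⟨y⟩^{a−d} · ⟨x − y⟩^{b−d} ≤ C · ⟨x⟩^{a+b−d}. -/
/-- The Japanese bracket `⟨x⟩ = max(‖x‖_∞, 1)` on `ℤ^d`. -/
noncomputable def jap {d : ℕ} (x : Fin d → ℤ) : ℝ := max ‖x‖ 1

open Finset
open scoped NNReal ENNReal

lemma cv_bern {a x : ℝ} (ha : 0 < a) (hx0 : 0 ≤ x) (hx1 : x ≤ 1) :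
    (1 - x) ^ a ≤ 1 - min a 1 * x := by
  rcases le_total a 1 with h | h
  · rw [min_eq_left h]
    have := rpow_one_add_le_one_add_mul_self (s := -x) (p := a) (by linarith) ha.le h
    simpa [sub_eq_add_neg, mul_comm] using this
  · rw [min_eq_right h]
    rcases eq_or_lt_of_le hx1 with rfl | hx1'
    · simp [Real.zero_rpow ha.ne']
    · have h1 : (0:ℝ) < 1 - x := by linarith
      calc (1-x)^a ≤ (1-x)^(1:ℝ) := Real.rpow_le_rpow_of_exponent_ge h1 (by linarith) h
        _ = 1 - 1*x := by rw [Real.rpow_one]; ring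

lemma cv_step_low {a : ℝ} (ha : 0 < a) (n : ℕ) :
    min a 1 * ((n:ℝ)+1)^(a-1) ≤ ((n:ℝ)+1)^a - (n:ℝ)^a := by
  set X : ℝ := (n:ℝ) + 1 with hXdef2
  have hX : 0 < X := by positivity
  have hX1 : 1 ≤ X := by simp [hXdef2]
  have hn : (n:ℝ) = X * (1 - 1/X) := by field_simp; rw [hXdef2]; ring
  have h1 : (n:ℝ)^a = X^a * (1 - 1/X)^a := by
    rw [hn, Real.mul_rpow hX.le (by rw [sub_nonneg]; exact div_le_one_of_le₀ hX1 hX.le)]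
  have h2 : (1 - 1/X)^a ≤ 1 - min a 1 * (1/X) :=
    cv_bern ha (by positivity) (div_le_one_of_le₀ hX1 hX.le)
  have h3 : X^a * (1/X) = X^(a-1) := by
    rw [Real.rpow_sub hX, Real.rpow_one]; ring
  have h4 : (n:ℝ)^a ≤ X^a - min a 1 * X^(a-1) := by
    rw [h1]
    calc X^a * (1 - 1/X)^a ≤ X^a * (1 - min a 1 * (1/X)) := by
          apply mul_le_mul_of_nonneg_left h2 (Real.rpow_nonneg hX.le a)
      _ = X^a - min a 1 * (X^a * (1/X)) := by ring
      _ = X^a - min a 1 * X^(a-1) := by rw [h3]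
  linarith

lemma cv_sum_low {a : ℝ} (ha : 0 < a) (N : ℕ) :
    ∑ n ∈ range N, ((n:ℝ)+1)^(a-1) ≤ (min a 1)⁻¹ * (N:ℝ)^a := by
  have hc : 0 < min a 1 := by simp [ha]
  induction N with
  | zero => simp [Real.zero_rpow ha.ne']
  | succ N ih =>
    rw [Finset.sum_range_succ]
    have h2 : ((N:ℝ)+1)^(a-1) ≤ (min a 1)⁻¹ * (((N:ℝ)+1)^a - (N:ℝ)^a) := by
      rw [le_inv_mul_iff₀ hc]
      exact cv_step_low ha N
    have : ((N+1:ℕ):ℝ) = (N:ℝ)+1 := by push_cast; ring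
    rw [this]
    nlinarith [ih]

lemma cv_step_high {u : ℝ} (hu : 0 < u) (m : ℕ) (hm : 1 ≤ m) :
    min u 1 * ((m:ℝ)+1)^(-u-1) ≤ (m:ℝ)^(-u) - ((m:ℝ)+1)^(-u) := by
  have hc0 : 0 < min u 1 := by simp [hu]
  have hc1 : min u 1 ≤ 1 := min_le_right _ _
  set Y : ℝ := (m:ℝ) + 1 with hYdef
  have hY : (0:ℝ) < Y := by positivity
  have hm1 : (1:ℝ) ≤ (m:ℝ) := by exact_mod_cast hm
  have hY2 : (2:ℝ) ≤ Y := by rw [hYdef]; linarith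
  have hy1 : 1/Y ≤ 1/2 := by
    apply div_le_div_of_nonneg_left (by norm_num) (by norm_num) hY2
  have hy0 : 0 < 1/Y := by positivity
  have hm0 : (0:ℝ) < (m:ℝ) := by exact_mod_cast hm
  have hmY : (m:ℝ) = Y * (1 - 1/Y) := by field_simp; rw [hYdef]; ring
  have h1m : (0:ℝ) < 1 - 1/Y := by nlinarith
  -- (1 - 1/Y)^u ≤ 1 - c/Y
  have hb := cv_bern hu hy0.le (by linarith)
  have hpos : 0 < (1 - 1/Y)^u := Real.rpow_pos_of_pos h1m u
  have hcy : min u 1 * (1/Y) ≤ 1/2 := by nlinarith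
  have hcy0 : 0 < 1 - min u 1 * (1/Y) := by linarith
  -- (1 - 1/Y)^(-u) ≥ (1 - c/Y)⁻¹ ≥ 1 + c/Y
  have h2 : (1 - min u 1 * (1/Y))⁻¹ ≤ (1 - 1/Y)^(-u) := by
    rw [Real.rpow_neg h1m.le]
    exact inv_anti₀ hpos hb
  have h3 : 1 + min u 1 * (1/Y) ≤ (1 - min u 1 * (1/Y))⁻¹ := by
    rw [inv_eq_one_div, le_div_iff₀ hcy0]
    nlinarith [sq_nonneg ((u ⊓ 1) * (1 / Y))]
  have h4 : (m:ℝ)^(-u) = Y^(-u) * (1 - 1/Y)^(-u) := by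
    rw [hmY, Real.mul_rpow hY.le h1m.le]
  have hYu : 0 < Y^(-u) := Real.rpow_pos_of_pos hY _
  have h5 : Y^(-u) * (1/Y) = Y^(-u-1) := by
    rw [Real.rpow_sub hY, Real.rpow_one]; ring
  calc min u 1 * Y^(-u-1) = Y^(-u) * (min u 1 * (1/Y)) := by rw [← h5]; ring
    _ ≤ Y^(-u) * ((1 - 1/Y)^(-u) - 1) := by
        apply mul_le_mul_of_nonneg_left _ hYu.le
        have := le_trans h3 h2
        linarith
    _ = (m:ℝ)^(-u) - Y^(-u) := by rw [h4]; ring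

lemma cv_sum_high_aux {u : ℝ} (hu : 0 < u) (N : ℕ) (hN : 1 ≤ N) :
    ∀ K, N ≤ K → ∑ n ∈ Finset.Ico (N+1) (K+1), (n:ℝ)^(-u-1)
      ≤ (min u 1)⁻¹ * ((N:ℝ)^(-u) - (K:ℝ)^(-u)) := by
  have hc : 0 < min u 1 := by simp [hu]
  intro K
  induction K with
  | zero => intro h; omega
  | succ K ih =>
    intro hNK
    rcases Nat.lt_or_ge N (K+1) with h | h
    · have hNK' : N ≤ K := by omega
      rw [Finset.sum_Ico_succ_top (by omega)]
      have hstep : ((K+1:ℕ):ℝ)^(-u-1) ≤ (min u 1)⁻¹ * ((K:ℝ)^(-u) - ((K:ℝ)+1)^(-u)) := by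
        rw [le_inv_mul_iff₀ hc]
        push_cast
        exact cv_step_high hu K (by omega)
      have := ih hNK'
      push_cast at *
      linarith
    · have : N = K+1 := by omega
      subst this
      simp
lemma cv_sum_high {u : ℝ} (hu : 0 < u) (N M : ℕ) (hN : 1 ≤ N) :
    ∑ n ∈ Finset.Ico N M, (n:ℝ)^(-u-1) ≤ (1 + (min u 1)⁻¹) * (N:ℝ)^(-u) := by
  have hc : 0 < min u 1 := by simp [hu]
  have hN0 : (1:ℝ) ≤ (N:ℝ) := by exact_mod_cast hN
  set K := max M N with hK
  have hsub : Finset.Ico N M ⊆ insert N (Finset.Ico (N+1) (K+1)) := by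
    intro n hn
    rw [Finset.mem_Ico] at hn
    rcases Nat.eq_or_lt_of_le hn.1 with h | h
    · simp [h.symm]
    · simp only [Finset.mem_insert, Finset.mem_Ico]
      right; constructor; omega
      have : n < K + 1 := by omega
      exact this
  calc ∑ n ∈ Finset.Ico N M, (n:ℝ)^(-u-1)
      ≤ ∑ n ∈ insert N (Finset.Ico (N+1) (K+1)), (n:ℝ)^(-u-1) := by
        apply Finset.sum_le_sum_of_subset_of_nonneg hsub
        intro i _ _
        positivity
    _ = (N:ℝ)^(-u-1) + ∑ n ∈ Finset.Ico (N+1) (K+1), (n:ℝ)^(-u-1) := by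
        rw [Finset.sum_insert (by simp)]
    _ ≤ (N:ℝ)^(-u) + (min u 1)⁻¹ * ((N:ℝ)^(-u) - (K:ℝ)^(-u)) := by
        have h1 : (N:ℝ)^(-u-1) ≤ (N:ℝ)^(-u) :=
          Real.rpow_le_rpow_of_exponent_le hN0 (by linarith)
        have h2 := cv_sum_high_aux hu N hN K (le_max_right _ _)
        linarith
    _ ≤ (1 + (min u 1)⁻¹) * (N:ℝ)^(-u) := by
        have : (0:ℝ) ≤ (K:ℝ)^(-u) := Real.rpow_nonneg (by positivity) _
        have h3 : (min u 1)⁻¹ * ((N:ℝ)^(-u) - (K:ℝ)^(-u)) ≤ (min u 1)⁻¹ * (N:ℝ)^(-u) := by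
          apply mul_le_mul_of_nonneg_left _ (by positivity)
          linarith
        linarith

/-- ℕ-valued Japanese bracket -/
def Mf {d : ℕ} (y : Fin d → ℤ) : ℕ := max (Finset.univ.sup fun i => (y i).natAbs) 1

lemma one_le_Mf {d : ℕ} (y : Fin d → ℤ) : 1 ≤ Mf y := le_max_right _ _

lemma norm_eq_sup {d : ℕ} (y : Fin d → ℤ) :
    ‖y‖ = ((Finset.univ.sup fun i => (y i).natAbs : ℕ) : ℝ) := by
  have hrfl : ‖y‖ = ((Finset.univ.sup fun b => ‖y b‖₊ : NNReal) : ℝ) := rfl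
  rw [hrfl]
  have h : (Finset.univ.sup fun b => ‖y b‖₊)
      = ((Finset.univ.sup fun i => (y i).natAbs : ℕ) : ℝ≥0) := by
    rw [Finset.comp_sup_eq_sup_comp (fun k : ℕ => (k : ℝ≥0))
      (fun p q => by simp [Nat.cast_max]) (by simp)]
    apply Finset.sup_congr rfl
    intro i _
    simp only [Function.comp_apply]
    exact (NNReal.natCast_natAbs (y i)).symm
  rw [h]
  norm_cast

lemma jap_eq {d : ℕ} (y : Fin d → ℤ) : jap y = (Mf y : ℝ) := by
  rw [jap, norm_eq_sup, Mf]
  push_cast [Nat.cast_max]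
  norm_num

lemma Mf_triangle {d : ℕ} (x y : Fin d → ℤ) : Mf x ≤ Mf y + Mf (x - y) := by
  have h : (Mf x : ℝ) ≤ (Mf y : ℝ) + (Mf (x - y) : ℝ) := by
    rw [← jap_eq, ← jap_eq, ← jap_eq]
    have h1 : ‖x‖ ≤ ‖y‖ + ‖x - y‖ := by
      have : x = y + (x - y) := by ring
      calc ‖x‖ = ‖y + (x - y)‖ := by rw [← this]
        _ ≤ ‖y‖ + ‖x - y‖ := norm_add_le _ _
    unfold jap
    have a1 : ‖y‖ ≤ max ‖y‖ 1 := le_max_left _ _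
    have a2 : ‖x-y‖ ≤ max ‖x-y‖ 1 := le_max_left _ _
    have a3 : (1:ℝ) ≤ max ‖y‖ 1 := le_max_right _ _
    have a4 : (1:ℝ) ≤ max ‖x-y‖ 1 := le_max_right _ _
    apply max_le <;> linarith
  exact_mod_cast h

/-- the box of radius n -/
noncomputable def Bx (d n : ℕ) : Finset (Fin d → ℤ) := Fintype.piFinset fun _ => Finset.Icc (-(n:ℤ)) (n:ℤ)

lemma mem_Bx {d n : ℕ} {y : Fin d → ℤ} :
    y ∈ Bx d n ↔ ∀ i, (y i).natAbs ≤ n := by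
  simp only [Bx, Fintype.mem_piFinset, Finset.mem_Icc]
  constructor
  · intro h i; have := h i; omega
  · intro h i; have := h i; omega

lemma card_Bx {d n : ℕ} : (Bx d n).card = (2*n+1)^d := by
  simp only [Bx, Fintype.card_piFinset, Int.card_Icc]
  have : ((n:ℤ) + 1 - -(n:ℤ)).toNat = 2*n+1 := by omega
  rw [this, Finset.prod_const, Finset.card_univ, Fintype.card_fin]

lemma pow_sub_pow_le_int (x y : ℤ) (h0 : 0 ≤ y) (h : y ≤ x) (d : ℕ) :
    x^d - y^d ≤ d * x^(d-1) * (x - y) := by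
  have hg := geom_sum₂_mul x y d
  rw [← hg]
  apply mul_le_mul_of_nonneg_right _ (by omega)
  calc ∑ i ∈ range d, x^i * y^(d-1-i) ≤ ∑ _i ∈ range d, x^(d-1) := by
        apply Finset.sum_le_sum
        intro i hi
        rw [Finset.mem_range] at hi
        have hx : 0 ≤ x := h0.trans h
        calc x^i * y^(d-1-i) ≤ x^i * x^(d-1-i) := by
              apply mul_le_mul_of_nonneg_left (pow_le_pow_left₀ h0 h _) (pow_nonneg hx i)
          _ = x^(d-1) := by rw [← pow_add]; congr 1; omega
    _ = d * x^(d-1) := by rw [Finset.sum_const, Finset.card_range, nsmul_eq_mul]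

lemma shell_card_nat (n d : ℕ) (hn : 2 ≤ n) :
    (2*n+1)^d - (2*n-1)^d ≤ 2*d*3^d * n^(d-1) := by
  have hz : ((2*n+1:ℕ):ℤ)^d ≤ ((2*n-1:ℕ):ℤ)^d + ((2*d*3^d * n^(d-1) : ℕ):ℤ) := by
    have h1 := pow_sub_pow_le_int ((2*n+1:ℕ):ℤ) ((2*n-1:ℕ):ℤ) (by positivity) (by omega) d
    have h2 : ((2*n+1:ℕ):ℤ) - ((2*n-1:ℕ):ℤ) = 2 := by omega
    rw [h2] at h1
    have h3 : ((2*n+1:ℕ):ℤ)^(d-1) ≤ ((3*n:ℕ):ℤ)^(d-1) := by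
      apply pow_le_pow_left₀ (by positivity) (by omega)
    have h4 : (d:ℤ) * ((2*n+1:ℕ):ℤ)^(d-1) * 2 ≤ ((2*d*3^d * n^(d-1) : ℕ):ℤ) := by
      calc (d:ℤ) * ((2*n+1:ℕ):ℤ)^(d-1) * 2 ≤ (d:ℤ) * ((3*n:ℕ):ℤ)^(d-1) * 2 := by
            apply mul_le_mul_of_nonneg_right (mul_le_mul_of_nonneg_left h3 (by positivity)) (by norm_num)
        _ = 2*(d:ℤ)*(((3:ℕ):ℤ)^(d-1) * ((n:ℕ):ℤ)^(d-1)) := by push_cast [mul_pow]; ring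
        _ ≤ 2*(d:ℤ)*(((3:ℕ):ℤ)^d * ((n:ℕ):ℤ)^(d-1)) := by
            apply mul_le_mul_of_nonneg_left _ (by positivity)
            apply mul_le_mul_of_nonneg_right _ (by positivity)
            exact pow_le_pow_right₀ (by norm_num) (by omega)
        _ = ((2*d*3^d * n^(d-1) : ℕ):ℤ) := by push_cast; ring
    linarith
  have hle : (2*n-1)^d ≤ (2*n+1)^d := Nat.pow_le_pow_left (by omega) d
  have hz' : (2*n+1:ℕ)^d ≤ (2*n-1:ℕ)^d + (2*d*3^d * n^(d-1) : ℕ) := by exact_mod_cast hz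
  omega

lemma fiber_finite {d : ℕ} (n : ℕ) : {y : Fin d → ℤ | Mf y = n}.Finite := by
  apply Set.Finite.subset (Bx d (max n 1)).finite_toSet
  intro y hy
  simp only [Set.mem_setOf_eq] at hy
  simp only [Finset.coe_insert, Finset.mem_coe]
  rw [mem_Bx]
  intro i
  calc (y i).natAbs ≤ Finset.univ.sup fun i => (y i).natAbs := Finset.le_sup (f := fun i => (y i).natAbs) (Finset.mem_univ i)
    _ ≤ Mf y := le_max_left _ _
    _ ≤ max n 1 := by rw [hy]; exact le_max_left _ _

lemma card_fiber {d : ℕ} (hd : 1 ≤ d) (n : ℕ) :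
    (fiber_finite (d := d) n).toFinset.card ≤ 2*d*3^d * (max n 1)^(d-1) := by
  have hmem : ∀ y : Fin d → ℤ, y ∈ (fiber_finite (d := d) n).toFinset ↔ Mf y = n := by
    intro y; rw [Set.Finite.mem_toFinset]; rfl
  match n with
  | 0 =>
    have : (fiber_finite (d := d) 0).toFinset = ∅ := by
      apply Finset.eq_empty_of_forall_notMem
      intro y hy
      rw [hmem] at hy
      have := one_le_Mf y
      omega
    simp [this]
  | 1 =>
    have hsub : (fiber_finite (d := d) 1).toFinset ⊆ Bx d 1 := by
      intro y hy
      rw [hmem] at hy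
      rw [mem_Bx]
      intro i
      calc (y i).natAbs ≤ Finset.univ.sup fun i => (y i).natAbs := Finset.le_sup (f := fun i => (y i).natAbs) (Finset.mem_univ i)
        _ ≤ Mf y := le_max_left _ _
        _ = 1 := hy
    calc (fiber_finite (d := d) 1).toFinset.card ≤ (Bx d 1).card := Finset.card_le_card hsub
      _ = 3^d := by rw [card_Bx]
      _ ≤ 2*d*3^d * (max 1 1)^(d-1) := by
          simp only [max_self, one_pow, mul_one]
          calc 3^d = 1*3^d := (one_mul _).symm
            _ ≤ 2*d*3^d := by
                apply Nat.mul_le_mul_right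
                omega
  | (m+2) =>
    set n := m + 2 with hn
    have hsub : (fiber_finite (d := d) n).toFinset ⊆ Bx d n \ Bx d (n-1) := by
      intro y hy
      rw [hmem] at hy
      have hsup : (Finset.univ.sup fun i => (y i).natAbs) = n := by
        have : Mf y = n := hy
        rw [Mf] at this
        omega
      rw [Finset.mem_sdiff, mem_Bx, mem_Bx]
      constructor
      · intro i
        calc (y i).natAbs ≤ (Finset.univ.sup fun i => (y i).natAbs) :=
              Finset.le_sup (f := fun i => (y i).natAbs) (Finset.mem_univ i)
          _ = n := hsup
      · intro hall
        have : (Finset.univ.sup fun i => (y i).natAbs) ≤ n - 1 := by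
          apply Finset.sup_le
          intro i _
          exact hall i
        omega
    have hBsub : Bx d (n-1) ⊆ Bx d n := by
      intro y hy
      rw [mem_Bx] at *
      intro i
      have := hy i
      omega
    calc (fiber_finite (d := d) n).toFinset.card ≤ (Bx d n \ Bx d (n-1)).card :=
          Finset.card_le_card hsub
      _ = (Bx d n).card - (Bx d (n-1)).card := Finset.card_sdiff_of_subset hBsub
      _ = (2*n+1)^d - (2*(n-1)+1)^d := by rw [card_Bx, card_Bx]
      _ = (2*n+1)^d - (2*n-1)^d := by
          have h21 : 2*(n-1)+1 = 2*n-1 := by omega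
          rw [h21]
      _ ≤ 2*d*3^d * n^(d-1) := shell_card_nat n d (by omega)
      _ = 2*d*3^d * (max n 1)^(d-1) := by rw [Nat.max_eq_left (by omega)]

lemma master {d : ℕ} (hd : 1 ≤ d) (G : ℕ → ℝ≥0∞) :
    ∑' y : Fin d → ℤ, G (Mf y)
      ≤ (2*d*3^d : ℕ) * ∑' n : ℕ, ((max n 1 : ℕ) : ℝ≥0∞)^(d-1) * G n := by
  have h1 : ∑' y : Fin d → ℤ, G (Mf y)
      = ∑' n : ℕ, ∑' (_ : {y : Fin d → ℤ // Mf y = n}), G n := by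
    rw [← (Equiv.sigmaFiberEquiv (Mf (d := d))).tsum_eq (fun y => G (Mf y))]
    rw [ENNReal.tsum_sigma']
    apply tsum_congr
    intro n
    apply tsum_congr
    intro y
    simp [y.2]
  rw [h1]
  rw [← ENNReal.tsum_mul_left]
  apply Summable.tsum_le_tsum _ ENNReal.summable ENNReal.summable
  intro n
  -- inner: tsum of a constant over fiber
  have hfin : Finite {y : Fin d → ℤ // Mf y = n} := (fiber_finite (d := d) n).to_subtype
  have hfin2 : Fintype {y : Fin d → ℤ // Mf y = n} := Fintype.ofFinite _
  have h2 : ∑' (_ : {y : Fin d → ℤ // Mf y = n}), G n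
      = (Fintype.card {y : Fin d → ℤ // Mf y = n} : ℝ≥0∞) * G n := by
    rw [tsum_fintype]
    simp [Finset.sum_const, nsmul_eq_mul]
  rw [h2]
  have h3 : Fintype.card {y : Fin d → ℤ // Mf y = n} ≤ 2*d*3^d * (max n 1)^(d-1) := by
    have hcard : Fintype.card {y : Fin d → ℤ // Mf y = n}
        = (fiber_finite (d := d) n).toFinset.card := by
      rw [← Nat.card_eq_fintype_card]
      have : Nat.card {y : Fin d → ℤ // Mf y = n}
          = Nat.card ↥{y : Fin d → ℤ | Mf y = n} := rfl
      rw [this, Nat.card_coe_set_eq, Set.ncard_eq_toFinset_card _ (fiber_finite (d := d) n)]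
    rw [hcard]
    exact card_fiber hd n
  calc (Fintype.card {y : Fin d → ℤ // Mf y = n} : ℝ≥0∞) * G n
      ≤ ((2*d*3^d * (max n 1)^(d-1) : ℕ) : ℝ≥0∞) * G n := by
        apply mul_le_mul_left
        exact_mod_cast h3
    _ = (2*d*3^d : ℕ) * (((max n 1 : ℕ):ℝ≥0∞)^(d-1) * G n) := by
        push_cast
        ring

lemma ofReal_nat_rpow (n : ℕ) (hn : 1 ≤ n) (c : ℝ) :
    ((n:ℝ≥0∞))^c = ENNReal.ofReal ((n:ℝ)^c) := by
  rw [← ENNReal.ofReal_rpow_of_pos (by exact_mod_cast hn), ENNReal.ofReal_natCast]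

/-- antitone in base for negative exponents -/
lemma rpow_neg_anti {r s : ℕ} (h : r ≤ s) (hr : 1 ≤ r) {c : ℝ} (hc : 0 ≤ c) :
    (s:ℝ≥0∞)^(-c) ≤ (r:ℝ≥0∞)^(-c) := by
  rw [ENNReal.rpow_neg, ENNReal.rpow_neg]
  apply ENNReal.inv_le_inv.2
  exact ENNReal.rpow_le_rpow (by exact_mod_cast h) hc

/-- if `r ≤ 2 s` then `s ^ (-c) ≤ 2^c * r^(-c)` -/
lemma rpow_neg_le_double {r s : ℕ} (h : r ≤ 2*s) (hr : 1 ≤ r) {c : ℝ} (hc : 0 ≤ c) :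
    (s:ℝ≥0∞)^(-c) ≤ 2^c * (r:ℝ≥0∞)^(-c) := by
  have hs : 1 ≤ s := by omega
  have h2 : (r:ℝ≥0∞)^c ≤ 2^c * (s:ℝ≥0∞)^c := by
    calc (r:ℝ≥0∞)^c ≤ ((2*s : ℕ):ℝ≥0∞)^c := ENNReal.rpow_le_rpow (by exact_mod_cast h) hc
      _ = 2^c * (s:ℝ≥0∞)^c := by
          push_cast
          rw [ENNReal.mul_rpow_of_nonneg _ _ hc]
  have h2top : (2:ℝ≥0∞)^c ≠ ⊤ := ENNReal.rpow_ne_top_of_nonneg hc (by norm_num)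
  have h20 : (2:ℝ≥0∞)^c ≠ 0 := by
    simp [ENNReal.rpow_eq_zero_iff]
  rw [ENNReal.rpow_neg, ENNReal.rpow_neg]
  have h3 : ((2:ℝ≥0∞)^c * (s:ℝ≥0∞)^c)⁻¹ ≤ ((r:ℝ≥0∞)^c)⁻¹ := ENNReal.inv_le_inv.2 h2
  calc ((s:ℝ≥0∞)^c)⁻¹ = 2^c * ((2:ℝ≥0∞)^c * (s:ℝ≥0∞)^c)⁻¹ := by
        rw [ENNReal.mul_inv (Or.inl h20) (Or.inl h2top), ← mul_assoc,
          ENNReal.mul_inv_cancel h20 h2top, one_mul]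
    _ ≤ 2^c * ((r:ℝ≥0∞)^c)⁻¹ := by exact mul_le_mul_right h3 _

lemma one_dim_low {a : ℝ} (ha : 0 < a) (R : ℕ) (hR : 1 ≤ R) :
    ∑' n : ℕ, (if n ≤ R then ((max n 1 : ℕ) : ℝ≥0∞)^(a-1) else 0)
      ≤ ENNReal.ofReal ((min a 1)⁻¹ + 1) * (R:ℝ≥0∞)^a := by
  have hR1 : (1:ℝ) ≤ (R:ℝ) := by exact_mod_cast hR
  apply Summable.tsum_le_of_sum_le ENNReal.summable
  intro s
  have hsub : s.filter (· ≤ R) ⊆ Finset.range (R+1) := by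
    intro n hn
    simp only [Finset.mem_filter] at hn
    simp only [Finset.mem_range]
    omega
  calc ∑ n ∈ s, (if n ≤ R then ((max n 1 : ℕ) : ℝ≥0∞)^(a-1) else 0)
      = ∑ n ∈ s.filter (· ≤ R), ((max n 1 : ℕ) : ℝ≥0∞)^(a-1) := Finset.sum_filter _ _ |>.symm
    _ ≤ ∑ n ∈ Finset.range (R+1), ((max n 1 : ℕ) : ℝ≥0∞)^(a-1) :=
        Finset.sum_le_sum_of_subset hsub
    _ = ENNReal.ofReal (∑ n ∈ Finset.range (R+1), ((max n 1 : ℕ):ℝ)^(a-1)) := by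
        rw [ENNReal.ofReal_sum_of_nonneg]
        · apply Finset.sum_congr rfl
          intro n _
          exact ofReal_nat_rpow _ (by omega) _
        · intro n _
          positivity
    _ ≤ ENNReal.ofReal (((min a 1)⁻¹ + 1) * (R:ℝ)^a) := by
        apply ENNReal.ofReal_le_ofReal
        have hsplit : ∑ n ∈ Finset.range (R+1), ((max n 1 : ℕ):ℝ)^(a-1)
            = (∑ n ∈ Finset.range R, ((n:ℝ)+1)^(a-1)) + 1 := by
          rw [Finset.sum_range_succ']
          congr 1
          · apply Finset.sum_congr rfl
            intro n _
            have : (max (n+1) 1 : ℕ) = n+1 := by omega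
            rw [this]
            push_cast
            ring_nf
          · norm_num
        rw [hsplit]
        have h1 := cv_sum_low ha R
        have h2 : (1:ℝ) ≤ (R:ℝ)^a := Real.one_le_rpow hR1 ha.le
        have hc : (0:ℝ) < min a 1 := by simp [ha]
        have : (min a 1)⁻¹ * (R:ℝ)^a + 1 ≤ ((min a 1)⁻¹ + 1) * (R:ℝ)^a := by nlinarith
        linarith
    _ = ENNReal.ofReal ((min a 1)⁻¹ + 1) * (R:ℝ≥0∞)^a := by
        rw [ENNReal.ofReal_mul (by positivity), ofReal_nat_rpow _ hR]

lemma one_dim_high {t : ℝ} (ht : 1 < t) (N : ℕ) (hN : 1 ≤ N) :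
    ∑' n : ℕ, (if N ≤ n then ((max n 1 : ℕ) : ℝ≥0∞)^(-t) else 0)
      ≤ ENNReal.ofReal (1 + (min (t-1) 1)⁻¹) * (N:ℝ≥0∞)^(1-t) := by
  have hu : 0 < t - 1 := by linarith
  apply Summable.tsum_le_of_sum_le ENNReal.summable
  intro s
  set M := s.sup id + 1 with hM
  have hsub : s.filter (N ≤ ·) ⊆ Finset.Ico N M := by
    intro n hn
    simp only [Finset.mem_filter] at hn
    simp only [Finset.mem_Ico]
    refine ⟨hn.2, ?_⟩
    have : n ≤ s.sup id := Finset.le_sup (f := id) hn.1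
    omega
  calc ∑ n ∈ s, (if N ≤ n then ((max n 1 : ℕ) : ℝ≥0∞)^(-t) else 0)
      = ∑ n ∈ s.filter (N ≤ ·), ((max n 1 : ℕ) : ℝ≥0∞)^(-t) := Finset.sum_filter _ _ |>.symm
    _ ≤ ∑ n ∈ Finset.Ico N M, ((max n 1 : ℕ) : ℝ≥0∞)^(-t) := Finset.sum_le_sum_of_subset hsub
    _ = ENNReal.ofReal (∑ n ∈ Finset.Ico N M, (n:ℝ)^(-t)) := by
        rw [ENNReal.ofReal_sum_of_nonneg]
        · apply Finset.sum_congr rfl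
          intro n hn
          rw [Finset.mem_Ico] at hn
          have hmax : (max n 1 : ℕ) = n := by omega
          rw [hmax]
          exact ofReal_nat_rpow _ (by omega) _
        · intro n _
          positivity
    _ ≤ ENNReal.ofReal ((1 + (min (t-1) 1)⁻¹) * (N:ℝ)^(1-t)) := by
        apply ENNReal.ofReal_le_ofReal
        have := cv_sum_high hu N M hN
        have he : -(t-1)-1 = -t := by ring
        have he2 : -(t-1) = 1-t := by ring
        rw [he, he2] at this
        exact this
    _ = ENNReal.ofReal (1 + (min (t-1) 1)⁻¹) * (N:ℝ≥0∞)^(1-t) := by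
        rw [ENNReal.ofReal_mul (by positivity), ofReal_nat_rpow _ hN]

lemma natCast_ennreal_ne_zero {n : ℕ} (h : 1 ≤ n) : (n:ℝ≥0∞) ≠ 0 := by
  have : n ≠ 0 := by omega
  exact_mod_cast this

lemma regionA {d : ℕ} (hd : 1 ≤ d) {a b : ℝ} (ha : 0 < a) (hb : 0 < b) (hab : a + b < d) :
    ∃ C : ℝ≥0∞, C ≠ ⊤ ∧ ∀ x : Fin d → ℤ,
      ∑' y : Fin d → ℤ, (if 2 * Mf y ≤ Mf x
          then (Mf y : ℝ≥0∞)^(a - (d:ℝ)) * (Mf (x - y) : ℝ≥0∞)^(b - (d:ℝ)) else 0)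
        ≤ C * (Mf x : ℝ≥0∞)^(a + b - (d:ℝ)) := by
  have hbd : (0:ℝ) ≤ (d:ℝ) - b := by linarith
  refine ⟨2^((d:ℝ)-b) * ((2*d*3^d : ℕ):ℝ≥0∞) * ENNReal.ofReal ((min a 1)⁻¹ + 1), ?_, ?_⟩
  · apply ENNReal.mul_ne_top (ENNReal.mul_ne_top _ (ENNReal.natCast_ne_top _)) ENNReal.ofReal_ne_top
    exact ENNReal.rpow_ne_top_of_nonneg hbd (by norm_num)
  intro x
  set R := Mf x with hRdef
  have hR1 : 1 ≤ R := one_le_Mf x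
  have hR0 : (R:ℝ≥0∞) ≠ 0 := natCast_ennreal_ne_zero hR1
  have hRtop : (R:ℝ≥0∞) ≠ ⊤ := ENNReal.natCast_ne_top _
  set G : ℕ → ℝ≥0∞ := fun n => if 2*n ≤ R then ((max n 1 : ℕ):ℝ≥0∞)^(a-(d:ℝ)) else 0 with hGdef
  have hterm : ∀ y : Fin d → ℤ,
      (if 2 * Mf y ≤ R then (Mf y : ℝ≥0∞)^(a - (d:ℝ)) * (Mf (x - y) : ℝ≥0∞)^(b - (d:ℝ)) else 0)
        ≤ (2^((d:ℝ)-b) * (R:ℝ≥0∞)^(b-(d:ℝ))) * G (Mf y) := by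
    intro y
    rw [hGdef]
    simp only []
    by_cases hy : 2 * Mf y ≤ R
    · rw [if_pos hy, if_pos hy]
      have htri : R ≤ 2 * Mf (x - y) := by
        have h1 := Mf_triangle x y
        omega
      have h1 : (Mf (x-y) : ℝ≥0∞)^(b-(d:ℝ)) ≤ 2^((d:ℝ)-b) * (R:ℝ≥0∞)^(b-(d:ℝ)) := by
        have heq : b - (d:ℝ) = -((d:ℝ)-b) := by ring
        rw [heq]
        exact rpow_neg_le_double htri hR1 hbd
      have hmax : (max (Mf y) 1 : ℕ) = Mf y := by have := one_le_Mf y; omega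
      rw [hmax]
      calc (Mf y : ℝ≥0∞)^(a-(d:ℝ)) * (Mf (x-y) : ℝ≥0∞)^(b-(d:ℝ))
          ≤ (Mf y : ℝ≥0∞)^(a-(d:ℝ)) * (2^((d:ℝ)-b) * (R:ℝ≥0∞)^(b-(d:ℝ))) := mul_le_mul_right h1 _
        _ = (2^((d:ℝ)-b) * (R:ℝ≥0∞)^(b-(d:ℝ))) * (Mf y : ℝ≥0∞)^(a-(d:ℝ)) := by ring
    · rw [if_neg hy, if_neg hy, mul_zero]
  have hpt : ∀ n : ℕ, ((max n 1 : ℕ):ℝ≥0∞)^(d-1) * G n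
      ≤ (if n ≤ R then ((max n 1 : ℕ):ℝ≥0∞)^(a-1) else 0) := by
    intro n
    rw [hGdef]
    simp only []
    by_cases hn : 2*n ≤ R
    · rw [if_pos hn, if_pos (by omega : n ≤ R)]
      have hμ1 : 1 ≤ (max n 1 : ℕ) := le_max_right _ _
      have hμ0 : ((max n 1 : ℕ):ℝ≥0∞) ≠ 0 := natCast_ennreal_ne_zero hμ1
      have hμtop : ((max n 1 : ℕ):ℝ≥0∞) ≠ ⊤ := ENNReal.natCast_ne_top _
      apply le_of_eq
      rw [← ENNReal.rpow_natCast (((max n 1 : ℕ)):ℝ≥0∞) (d-1), ← ENNReal.rpow_add _ _ hμ0 hμtop]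
      congr 1
      have : ((d-1 : ℕ):ℝ) = (d:ℝ) - 1 := by
        push_cast [Nat.cast_sub hd]
        ring
      rw [this]
      ring
    · rw [if_neg hn, mul_zero]
      exact zero_le
  calc ∑' y : Fin d → ℤ, (if 2 * Mf y ≤ R
          then (Mf y : ℝ≥0∞)^(a - (d:ℝ)) * (Mf (x - y) : ℝ≥0∞)^(b - (d:ℝ)) else 0)
      ≤ ∑' y : Fin d → ℤ, (2^((d:ℝ)-b) * (R:ℝ≥0∞)^(b-(d:ℝ))) * G (Mf y) :=
        Summable.tsum_le_tsum hterm ENNReal.summable ENNReal.summable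
    _ = (2^((d:ℝ)-b) * (R:ℝ≥0∞)^(b-(d:ℝ))) * ∑' y : Fin d → ℤ, G (Mf y) :=
        ENNReal.tsum_mul_left
    _ ≤ (2^((d:ℝ)-b) * (R:ℝ≥0∞)^(b-(d:ℝ))) *
          ((2*d*3^d : ℕ) * ∑' n : ℕ, ((max n 1 : ℕ) : ℝ≥0∞)^(d-1) * G n) :=
        mul_le_mul_right (master hd G) _
    _ ≤ (2^((d:ℝ)-b) * (R:ℝ≥0∞)^(b-(d:ℝ))) *
          ((2*d*3^d : ℕ) * ∑' n : ℕ, (if n ≤ R then ((max n 1 : ℕ):ℝ≥0∞)^(a-1) else 0)) := by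
        apply mul_le_mul_right
        apply mul_le_mul_right
        exact Summable.tsum_le_tsum hpt ENNReal.summable ENNReal.summable
    _ ≤ (2^((d:ℝ)-b) * (R:ℝ≥0∞)^(b-(d:ℝ))) *
          ((2*d*3^d : ℕ) * (ENNReal.ofReal ((min a 1)⁻¹ + 1) * (R:ℝ≥0∞)^a)) := by
        apply mul_le_mul_right
        apply mul_le_mul_right
        exact one_dim_low ha R hR1
    _ = (2^((d:ℝ)-b) * ((2*d*3^d : ℕ):ℝ≥0∞) * ENNReal.ofReal ((min a 1)⁻¹ + 1)) *
          ((R:ℝ≥0∞)^(b-(d:ℝ)) * (R:ℝ≥0∞)^a) := by ring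
    _ = (2^((d:ℝ)-b) * ((2*d*3^d : ℕ):ℝ≥0∞) * ENNReal.ofReal ((min a 1)⁻¹ + 1)) *
          (R:ℝ≥0∞)^(a + b - (d:ℝ)) := by
        rw [← ENNReal.rpow_add _ _ hR0 hRtop]
        congr 1
        ring

lemma regionC {d : ℕ} (hd : 1 ≤ d) {a b : ℝ} (ha : 0 < a) (hb : 0 < b) (hab : a + b < d) :
    ∃ C : ℝ≥0∞, C ≠ ⊤ ∧ ∀ x : Fin d → ℤ,
      ∑' y : Fin d → ℤ, (if Mf x ≤ 2 * Mf y ∧ Mf y ≤ Mf (x - y)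
          then (Mf y : ℝ≥0∞)^(a - (d:ℝ)) * (Mf (x - y) : ℝ≥0∞)^(b - (d:ℝ)) else 0)
        ≤ C * (Mf x : ℝ≥0∞)^(a + b - (d:ℝ)) := by
  set t : ℝ := (d:ℝ) + 1 - a - b with htdef
  have ht : 1 < t := by rw [htdef]; linarith
  have ht1 : (0:ℝ) ≤ t - 1 := by linarith
  have hbd : (0:ℝ) ≤ (d:ℝ) - b := by linarith
  refine ⟨((2*d*3^d : ℕ):ℝ≥0∞) * ENNReal.ofReal (1 + (min (t-1) 1)⁻¹) * 2^(t-1), ?_, ?_⟩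
  · apply ENNReal.mul_ne_top (ENNReal.mul_ne_top (ENNReal.natCast_ne_top _) ENNReal.ofReal_ne_top)
    exact ENNReal.rpow_ne_top_of_nonneg ht1 (by norm_num)
  intro x
  set R := Mf x with hRdef
  have hR1 : 1 ≤ R := one_le_Mf x
  set N : ℕ := (R+1)/2 with hNdef
  have hN1 : 1 ≤ N := by omega
  have hR2N : R ≤ 2*N := by omega
  set G : ℕ → ℝ≥0∞ := fun n =>
    if N ≤ n then ((max n 1 : ℕ):ℝ≥0∞)^(a+b-2*(d:ℝ)) else 0 with hGdef
  have hterm : ∀ y : Fin d → ℤ,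
      (if R ≤ 2 * Mf y ∧ Mf y ≤ Mf (x - y)
          then (Mf y : ℝ≥0∞)^(a - (d:ℝ)) * (Mf (x - y) : ℝ≥0∞)^(b - (d:ℝ)) else 0)
        ≤ G (Mf y) := by
    intro y
    rw [hGdef]
    simp only []
    by_cases hy : R ≤ 2 * Mf y ∧ Mf y ≤ Mf (x - y)
    · rw [if_pos hy, if_pos (by omega : N ≤ Mf y)]
      have hmax : (max (Mf y) 1 : ℕ) = Mf y := by have := one_le_Mf y; omega
      rw [hmax]
      have h1 : (Mf (x-y) : ℝ≥0∞)^(b-(d:ℝ)) ≤ (Mf y : ℝ≥0∞)^(b-(d:ℝ)) := by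
        have heq : b - (d:ℝ) = -((d:ℝ)-b) := by ring
        rw [heq]
        exact rpow_neg_anti hy.2 (one_le_Mf y) hbd
      have hμ0 : ((Mf y):ℝ≥0∞) ≠ 0 := natCast_ennreal_ne_zero (one_le_Mf y)
      have hμtop : ((Mf y):ℝ≥0∞) ≠ ⊤ := ENNReal.natCast_ne_top _
      calc (Mf y : ℝ≥0∞)^(a-(d:ℝ)) * (Mf (x-y) : ℝ≥0∞)^(b-(d:ℝ))
          ≤ (Mf y : ℝ≥0∞)^(a-(d:ℝ)) * (Mf y : ℝ≥0∞)^(b-(d:ℝ)) := mul_le_mul_right h1 _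
        _ = (Mf y : ℝ≥0∞)^(a+b-2*(d:ℝ)) := by
            rw [← ENNReal.rpow_add _ _ hμ0 hμtop]
            congr 1
            ring
    · rw [if_neg hy]
      exact zero_le
  have hpt : ∀ n : ℕ, ((max n 1 : ℕ):ℝ≥0∞)^(d-1) * G n
      ≤ (if N ≤ n then ((max n 1 : ℕ):ℝ≥0∞)^(-t) else 0) := by
    intro n
    rw [hGdef]
    simp only []
    by_cases hn : N ≤ n
    · rw [if_pos hn, if_pos hn]
      have hμ1 : 1 ≤ (max n 1 : ℕ) := le_max_right _ _
      have hμ0 : ((max n 1 : ℕ):ℝ≥0∞) ≠ 0 := natCast_ennreal_ne_zero hμ1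
      have hμtop : ((max n 1 : ℕ):ℝ≥0∞) ≠ ⊤ := ENNReal.natCast_ne_top _
      apply le_of_eq
      rw [← ENNReal.rpow_natCast (((max n 1 : ℕ)):ℝ≥0∞) (d-1), ← ENNReal.rpow_add _ _ hμ0 hμtop]
      congr 1
      have : ((d-1 : ℕ):ℝ) = (d:ℝ) - 1 := by
        push_cast [Nat.cast_sub hd]
        ring
      rw [this, htdef]
      ring
    · rw [if_neg hn, mul_zero]
      exact zero_le
  have hNbound : (N:ℝ≥0∞)^(1-t) ≤ 2^(t-1) * (R:ℝ≥0∞)^(a+b-(d:ℝ)) := by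
    have he1 : (1:ℝ) - t = -(t-1) := by ring
    have he2 : a + b - (d:ℝ) = -(t-1) := by rw [htdef]; ring
    rw [he1, he2]
    exact rpow_neg_le_double hR2N hR1 ht1
  calc ∑' y : Fin d → ℤ, (if R ≤ 2 * Mf y ∧ Mf y ≤ Mf (x - y)
          then (Mf y : ℝ≥0∞)^(a - (d:ℝ)) * (Mf (x - y) : ℝ≥0∞)^(b - (d:ℝ)) else 0)
      ≤ ∑' y : Fin d → ℤ, G (Mf y) := Summable.tsum_le_tsum hterm ENNReal.summable ENNReal.summable
    _ ≤ (2*d*3^d : ℕ) * ∑' n : ℕ, ((max n 1 : ℕ) : ℝ≥0∞)^(d-1) * G n := master hd G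
    _ ≤ (2*d*3^d : ℕ) * ∑' n : ℕ, (if N ≤ n then ((max n 1 : ℕ):ℝ≥0∞)^(-t) else 0) := by
        apply mul_le_mul_right
        exact Summable.tsum_le_tsum hpt ENNReal.summable ENNReal.summable
    _ ≤ (2*d*3^d : ℕ) * (ENNReal.ofReal (1 + (min (t-1) 1)⁻¹) * (N:ℝ≥0∞)^(1-t)) := by
        apply mul_le_mul_right
        exact one_dim_high ht N hN1
    _ ≤ (2*d*3^d : ℕ) * (ENNReal.ofReal (1 + (min (t-1) 1)⁻¹) *
          (2^(t-1) * (R:ℝ≥0∞)^(a+b-(d:ℝ)))) := by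
        apply mul_le_mul_right
        exact mul_le_mul_right hNbound _
    _ = ((2*d*3^d : ℕ):ℝ≥0∞) * ENNReal.ofReal (1 + (min (t-1) 1)⁻¹) * 2^(t-1) *
          (R:ℝ≥0∞)^(a+b-(d:ℝ)) := by ring

set_option maxHeartbeats 1000000 in
theorem convolution_estimate (d : ℕ) (hd : 1 ≤ d) (a b : ℝ) (ha : 0 < a) (hb : 0 < b)
    (hab : a + b < d) :
    ∃ C : ℝ, 0 < C ∧ ∀ x : Fin d → ℤ,
      Summable (fun y : Fin d → ℤ => jap y ^ (a - d) * jap (x - y) ^ (b - d)) ∧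
      ∑' y : Fin d → ℤ, jap y ^ (a - d) * jap (x - y) ^ (b - d)
        ≤ C * jap x ^ (a + b - d) := by
  have hab' : b + a < d := by linarith
  obtain ⟨CA, hCA, hA⟩ := regionA hd ha hb hab
  obtain ⟨CB, hCB, hB⟩ := regionA hd hb ha hab'
  obtain ⟨CC1, hCC1, hC1⟩ := regionC hd ha hb hab
  obtain ⟨CC2, hCC2, hC2⟩ := regionC hd hb ha hab'
  set CT : ℝ≥0∞ := CA + CB + CC1 + CC2 with hCTdef
  have hCT : CT ≠ ⊤ := by
    rw [hCTdef]
    finiteness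
  refine ⟨CT.toReal + 1, by positivity, ?_⟩
  intro x
  -- the ENNReal model
  set F : (Fin d → ℤ) → ℝ≥0∞ := fun y =>
    (Mf y : ℝ≥0∞)^(a - (d:ℝ)) * (Mf (x - y) : ℝ≥0∞)^(b - (d:ℝ)) with hFdef
  set f : (Fin d → ℤ) → ℝ := fun y => jap y ^ (a - d) * jap (x - y) ^ (b - d) with hfdef
  have hf_nonneg : ∀ y, 0 ≤ f y := by
    intro y
    rw [hfdef]
    have h1 : (0:ℝ) < jap y := by rw [jap_eq]; exact_mod_cast one_le_Mf y
    have h2 : (0:ℝ) < jap (x - y) := by rw [jap_eq]; exact_mod_cast one_le_Mf (x - y)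
    positivity
  have hofReal : ∀ y, ENNReal.ofReal (f y) = F y := by
    intro y
    rw [hfdef, hFdef]
    simp only []
    have h1 : (0:ℝ) < jap y := by rw [jap_eq]; exact_mod_cast one_le_Mf y
    have h2 : (0:ℝ) < jap (x - y) := by rw [jap_eq]; exact_mod_cast one_le_Mf (x - y)
    rw [ENNReal.ofReal_mul (by positivity)]
    rw [← ENNReal.ofReal_rpow_of_pos h1, ← ENNReal.ofReal_rpow_of_pos h2]
    rw [jap_eq y, jap_eq (x - y), ENNReal.ofReal_natCast, ENNReal.ofReal_natCast]
  -- cover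
  set tA : (Fin d → ℤ) → ℝ≥0∞ := fun y => if 2 * Mf y ≤ Mf x then F y else 0 with htA
  set tB : (Fin d → ℤ) → ℝ≥0∞ := fun y => if 2 * Mf (x - y) ≤ Mf x then F y else 0 with htB
  set tC1 : (Fin d → ℤ) → ℝ≥0∞ := fun y =>
    if Mf x ≤ 2 * Mf y ∧ Mf y ≤ Mf (x - y) then F y else 0 with htC1
  set tC2 : (Fin d → ℤ) → ℝ≥0∞ := fun y =>
    if Mf x ≤ 2 * Mf (x - y) ∧ Mf (x - y) ≤ Mf y then F y else 0 with htC2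
  have e1 : ∀ u v w z : ℝ≥0∞, u ≤ u + v + w + z := by
    intro u v w z
    calc u ≤ u + v := le_self_add
      _ ≤ u + v + w := le_self_add
      _ ≤ u + v + w + z := le_self_add
  have e2 : ∀ u v w z : ℝ≥0∞, v ≤ u + v + w + z := by
    intro u v w z
    calc v ≤ u + v := le_add_self
      _ ≤ u + v + w := le_self_add
      _ ≤ u + v + w + z := le_self_add
  have e3 : ∀ u v w z : ℝ≥0∞, w ≤ u + v + w + z := by
    intro u v w z
    calc w ≤ u + v + w := le_add_self
      _ ≤ u + v + w + z := le_self_add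
  have e4 : ∀ u v w z : ℝ≥0∞, z ≤ u + v + w + z := by
    intro u v w z
    exact le_add_self
  have hcover : ∀ y, F y ≤ tA y + tB y + tC1 y + tC2 y := by
    intro y
    have vA : tA y = if 2 * Mf y ≤ Mf x then F y else 0 := rfl
    have vB : tB y = if 2 * Mf (x - y) ≤ Mf x then F y else 0 := rfl
    have vC1 : tC1 y = if Mf x ≤ 2 * Mf y ∧ Mf y ≤ Mf (x - y) then F y else 0 := rfl
    have vC2 : tC2 y = if Mf x ≤ 2 * Mf (x - y) ∧ Mf (x - y) ≤ Mf y then F y else 0 := rfl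
    by_cases h1 : 2 * Mf y ≤ Mf x
    · rw [vA, if_pos h1]
      exact e1 _ _ _ _
    · by_cases h2 : 2 * Mf (x - y) ≤ Mf x
      · rw [vB, if_pos h2]
        exact e2 _ _ _ _
      · rcases le_total (Mf y) (Mf (x - y)) with h3 | h3
        · rw [vC1, if_pos (And.intro (by omega) h3)]
          exact e3 _ _ _ _
        · rw [vC2, if_pos (And.intro (by omega) h3)]
          exact e4 _ _ _ _
  -- tsum bound
  have hsum_le : ∑' y, F y ≤ CT * (Mf x : ℝ≥0∞)^(a + b - (d:ℝ)) := by
    have hsplit : ∑' y, F y ≤ (∑' y, tA y) + (∑' y, tB y) + (∑' y, tC1 y) + (∑' y, tC2 y) := by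
      calc ∑' y, F y ≤ ∑' y, (tA y + tB y + tC1 y + tC2 y) :=
            Summable.tsum_le_tsum hcover ENNReal.summable ENNReal.summable
        _ = (∑' y, tA y) + (∑' y, tB y) + (∑' y, tC1 y) + (∑' y, tC2 y) := by
            rw [ENNReal.tsum_add, ENNReal.tsum_add, ENNReal.tsum_add]
    have hA' : ∑' y, tA y ≤ CA * (Mf x : ℝ≥0∞)^(a + b - (d:ℝ)) := hA x
    have hB' : ∑' y, tB y ≤ CB * (Mf x : ℝ≥0∞)^(a + b - (d:ℝ)) := by
      have hsub : ∑' y, tB y = ∑' z, tB (x - z) :=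
        ((Equiv.subLeft x).tsum_eq tB).symm
      rw [hsub]
      have hcongr : ∀ z : Fin d → ℤ, tB (x - z)
          = (if 2 * Mf z ≤ Mf x
              then (Mf z : ℝ≥0∞)^(b - (d:ℝ)) * (Mf (x - z) : ℝ≥0∞)^(a - (d:ℝ)) else 0) := by
        intro z
        have v : tB (x - z) = if 2 * Mf (x - (x - z)) ≤ Mf x
            then (Mf (x - z) : ℝ≥0∞)^(a - (d:ℝ)) * (Mf (x - (x - z)) : ℝ≥0∞)^(b - (d:ℝ))
            else 0 := rfl
        rw [v, sub_sub_cancel]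
        exact if_congr Iff.rfl (mul_comm _ _) rfl
      rw [tsum_congr hcongr]
      calc _ ≤ CB * (Mf x : ℝ≥0∞)^(b + a - (d:ℝ)) := hB x
        _ = CB * (Mf x : ℝ≥0∞)^(a + b - (d:ℝ)) := by rw [add_comm b a]
    have hC1' : ∑' y, tC1 y ≤ CC1 * (Mf x : ℝ≥0∞)^(a + b - (d:ℝ)) := hC1 x
    have hC2' : ∑' y, tC2 y ≤ CC2 * (Mf x : ℝ≥0∞)^(a + b - (d:ℝ)) := by
      have hsub : ∑' y, tC2 y = ∑' z, tC2 (x - z) :=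
        ((Equiv.subLeft x).tsum_eq tC2).symm
      rw [hsub]
      have hcongr : ∀ z : Fin d → ℤ, tC2 (x - z)
          = (if Mf x ≤ 2 * Mf z ∧ Mf z ≤ Mf (x - z)
              then (Mf z : ℝ≥0∞)^(b - (d:ℝ)) * (Mf (x - z) : ℝ≥0∞)^(a - (d:ℝ)) else 0) := by
        intro z
        have v : tC2 (x - z) = if Mf x ≤ 2 * Mf (x - (x - z)) ∧ Mf (x - (x - z)) ≤ Mf (x - z)
            then (Mf (x - z) : ℝ≥0∞)^(a - (d:ℝ)) * (Mf (x - (x - z)) : ℝ≥0∞)^(b - (d:ℝ))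
            else 0 := rfl
        rw [v, sub_sub_cancel]
        exact if_congr Iff.rfl (mul_comm _ _) rfl
      rw [tsum_congr hcongr]
      calc _ ≤ CC2 * (Mf x : ℝ≥0∞)^(b + a - (d:ℝ)) := hC2 x
        _ = CC2 * (Mf x : ℝ≥0∞)^(a + b - (d:ℝ)) := by rw [add_comm b a]
    calc ∑' y, F y ≤ _ := hsplit
      _ ≤ CT * (Mf x : ℝ≥0∞)^(a + b - (d:ℝ)) := by
          rw [hCTdef]
          rw [add_mul, add_mul, add_mul]
          gcongr
  have hMfx0 : (Mf x : ℝ≥0∞) ≠ 0 := by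
    have h1 : 1 ≤ Mf x := one_le_Mf x
    exact_mod_cast (by omega : Mf x ≠ 0)
  have hFx_ne_top : (Mf x : ℝ≥0∞)^(a + b - (d:ℝ)) ≠ ⊤ := by
    intro hcontra
    rw [ENNReal.rpow_eq_top_iff] at hcontra
    rcases hcontra with ⟨h0, _⟩ | ⟨htop, _⟩
    · exact hMfx0 h0
    · exact ENNReal.natCast_ne_top _ htop
  have htsum_ne_top : ∑' y, F y ≠ ⊤ := by
    apply ne_top_of_le_ne_top _ hsum_le
    exact ENNReal.mul_ne_top hCT hFx_ne_top
  -- summability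
  have hsummable : Summable f := by
    have h1 : Summable (fun y => (f y).toNNReal) := by
      rw [← ENNReal.tsum_coe_ne_top_iff_summable]
      have : (fun y => ((f y).toNNReal : ℝ≥0∞)) = fun y => ENNReal.ofReal (f y) := rfl
      rw [this]
      rwa [tsum_congr hofReal]
    have h2 : (fun y => ((f y).toNNReal : ℝ)) = f := by
      funext y
      exact Real.coe_toNNReal _ (hf_nonneg y)
    rw [← h2]
    exact_mod_cast NNReal.summable_coe.2 h1
  refine ⟨hsummable, ?_⟩
  -- the bound
  have hjapx : jap x = (Mf x : ℝ) := jap_eq x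
  have hMx1 : (1:ℝ) ≤ (Mf x : ℝ) := by exact_mod_cast one_le_Mf x
  have hrpos : (0:ℝ) < (Mf x : ℝ)^(a + b - (d:ℝ)) := Real.rpow_pos_of_pos (by linarith) _
  have hkey : ∑' y, f y ≤ CT.toReal * (Mf x : ℝ)^(a + b - (d:ℝ)) := by
    have h1 : ENNReal.ofReal (∑' y, f y) = ∑' y, F y := by
      rw [ENNReal.ofReal_tsum_of_nonneg hf_nonneg hsummable]
      exact tsum_congr hofReal
    have h2 : ENNReal.ofReal (∑' y, f y)
        ≤ ENNReal.ofReal (CT.toReal * (Mf x : ℝ)^(a + b - (d:ℝ))) := by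
      rw [h1]
      calc ∑' y, F y ≤ CT * (Mf x : ℝ≥0∞)^(a + b - (d:ℝ)) := hsum_le
        _ = ENNReal.ofReal (CT.toReal * (Mf x : ℝ)^(a + b - (d:ℝ))) := by
            rw [ENNReal.ofReal_mul ENNReal.toReal_nonneg]
            rw [ENNReal.ofReal_toReal hCT]
            congr 1
            exact ofReal_nat_rpow _ (one_le_Mf x) _
    rwa [ENNReal.ofReal_le_ofReal_iff (by positivity)] at h2
  rw [hjapx]
  calc ∑' y, f y ≤ CT.toReal * (Mf x : ℝ)^(a + b - (d:ℝ)) := hkey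
    _ ≤ (CT.toReal + 1) * (Mf x : ℝ)^(a + b - (d:ℝ)) := by nlinarith [ENNReal.toReal_nonneg (a := CT)]
end

section
/- Let c > 0, ℓ ≥ 1 an integer, and let f : ℕ → [0, ∞) be nondecreasing with f(2n + ℓ) ≥ c·f(n)² for all n ≥ 0. If there exists n ≥ ℓ with f(n) ≥ 2/c, then f(3^k · n) ≥ (1/c)·2^{2^k} for every integer k ≥ 1. Consequently, if in addition f(n) ≤ C·log(n+2) for all n ≥ 0 and some constant C, then f(n) < 2/c for every n ≥ 0. -/
lemma aux_two_mul_le_two_pow (k : ℕ) (hk : 1 ≤ k) : 2 * k ≤ 2 ^ k := by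
  induction k, hk using Nat.le_induction with
  | base => norm_num
  | succ k hk IH =>
    have h2 : 2 ≤ 2 ^ k := Nat.one_lt_two_pow_iff.mpr (by omega)
    calc 2 * (k + 1) = 2 * k + 2 := by ring
      _ ≤ 2 ^ k + 2 ^ k := by omega
      _ = 2 ^ (k + 1) := by rw [pow_succ]; ring


theorem supermultiplicative_contradiction (c : ℝ) (hc : 0 < c) (ℓ : ℕ) (hℓ : 1 ≤ ℓ)
    (f : ℕ → ℝ) (hpos : ∀ n, 0 ≤ f n) (hmono : Monotone f)
    (hrec : ∀ n : ℕ, c * f n ^ 2 ≤ f (2 * n + ℓ)) :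
    (∀ n : ℕ, ℓ ≤ n → 2 / c ≤ f n →
      ∀ k : ℕ, 1 ≤ k → (1 / c) * 2 ^ (2 ^ k) ≤ f (3 ^ k * n)) ∧
    (∀ C : ℝ, (∀ n : ℕ, f n ≤ C * Real.log ((n : ℝ) + 2)) → ∀ n : ℕ, f n < 2 / c) := by
  have key : ∀ n : ℕ, ℓ ≤ n → 2 / c ≤ f n →
      ∀ k : ℕ, 1 ≤ k → (1 / c) * 2 ^ (2 ^ k) ≤ f (3 ^ k * n) := by
    intro n hn hfn k hk
    induction k, hk using Nat.le_induction with
    | base =>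
      have h1 : 2 * n + ℓ ≤ 3 ^ 1 * n := by
        have : 3 ^ 1 * n = 3 * n := by ring
        omega
      have h2 := hrec n
      have h3 := hmono h1
      have hsq : (2 / c) * (2 / c) ≤ f n * f n :=
        mul_le_mul hfn hfn (by positivity) (hpos n)
      have h4 : (1 / c) * 2 ^ (2 ^ 1) ≤ c * f n ^ 2 := by
        have : c * ((2/c) * (2/c)) ≤ c * (f n * f n) := by
          exact mul_le_mul_of_nonneg_left hsq hc.le
        have hcc : c * ((2/c) * (2/c)) = (1/c) * 2 ^ (2^1) := by
          field_simp; norm_num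
        nlinarith
      exact le_trans h4 (le_trans h2 h3)
    | succ k hk IH =>
      set m := 3 ^ k * n with hm
      have hml : ℓ ≤ m := le_trans hn (Nat.le_mul_of_pos_left n (by positivity))
      have h1 : 2 * m + ℓ ≤ 3 ^ (k + 1) * n := by
        have : 3 ^ (k + 1) * n = 3 * m := by rw [hm, pow_succ]; ring
        omega
      have h2 := hrec m
      have h3 := hmono h1
      have hA : (0:ℝ) < 2 ^ (2 ^ k) := by positivity
      have hfm : (1 / c) * 2 ^ (2 ^ k) ≤ f m := IH
      have hpow : (2:ℝ) ^ (2 ^ (k + 1)) = ((2:ℝ) ^ (2 ^ k)) ^ 2 := by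
        rw [← pow_mul, ← pow_succ]
      have hsq : ((1/c) * 2 ^ (2^k)) * ((1/c) * 2 ^ (2^k)) ≤ f m * f m :=
        mul_le_mul hfm hfm (by positivity) (hpos m)
      have h4 : (1 / c) * 2 ^ (2 ^ (k + 1)) ≤ c * f m ^ 2 := by
        rw [hpow]
        have : c * (((1/c) * 2 ^ (2^k)) * ((1/c) * 2 ^ (2^k))) ≤ c * (f m * f m) :=
          mul_le_mul_of_nonneg_left hsq hc.le
        have hcc : c * (((1/c) * 2 ^ (2^k)) * ((1/c) * 2 ^ (2^k)))
            = (1/c) * ((2:ℝ) ^ (2^k)) ^ 2 := by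
          field_simp
        nlinarith
      exact le_trans h4 (le_trans h2 h3)
  refine ⟨key, ?_⟩
  intro C hC
  by_contra h
  push_neg at h
  obtain ⟨n, hn⟩ := h
  set m := max n ℓ with hmdef
  have hfm : 2 / c ≤ f m := le_trans hn (hmono (le_max_left _ _))
  have hml : ℓ ≤ m := le_max_right _ _
  -- C is nonnegative
  have hC0 : 0 ≤ C := by
    have h0 := le_trans (hpos 0) (hC 0)
    norm_num at h0
    have hlog : (0:ℝ) < Real.log 2 := Real.log_pos (by norm_num)
    nlinarith
  set M : ℝ := Real.log 3 + Real.log (m + 2) with hM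
  have hM0 : 0 < M := by
    have h3 : (0:ℝ) < Real.log 3 := Real.log_pos (by norm_num)
    have h2 : (0:ℝ) < Real.log (m + 2) := Real.log_pos (by push_cast; linarith [Nat.cast_nonneg (α := ℝ) m])
    linarith
  -- choose k
  obtain ⟨k₀, hk₀⟩ := pow_unbounded_of_one_lt (c * C * M) (by norm_num : (1:ℝ) < 2)
  set k := max k₀ 1 with hk
  have hk1 : 1 ≤ k := le_max_right _ _
  have hkgt : c * C * M < 2 ^ k := lt_of_lt_of_le hk₀ (pow_le_pow_right₀ one_le_two (le_max_left _ _))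
  -- upper bound on f (3^k * m)
  have hub : f (3 ^ k * m) ≤ C * (k * Real.log 3 + Real.log (m + 2)) := by
    have h1 := hC (3 ^ k * m)
    have hle : ((3 ^ k * m : ℕ) : ℝ) + 2 ≤ (3:ℝ) ^ k * (m + 2) := by
      push_cast
      have h3k : (1:ℝ) ≤ 3 ^ k := one_le_pow₀ (by norm_num : (1:ℝ) ≤ 3)
      nlinarith [Nat.cast_nonneg (α := ℝ) m]
    have hlog : Real.log (((3 ^ k * m : ℕ) : ℝ) + 2) ≤ Real.log ((3:ℝ) ^ k * (m + 2)) := by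
      exact Real.log_le_log (by positivity) hle
    have heq : Real.log ((3:ℝ) ^ k * (m + 2)) = k * Real.log 3 + Real.log (m + 2) := by
      rw [Real.log_mul (by positivity) (by positivity), Real.log_pow]
    calc f (3 ^ k * m) ≤ C * Real.log (((3 ^ k * m : ℕ) : ℝ) + 2) := h1
      _ ≤ C * (k * Real.log 3 + Real.log (m + 2)) := by
          rw [← heq]; exact mul_le_mul_of_nonneg_left hlog hC0
  have hub2 : f (3 ^ k * m) ≤ C * M * k := by
    have hbound : (k : ℝ) * Real.log 3 + Real.log (m + 2) ≤ M * k := by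
      have hk1' : (1:ℝ) ≤ k := by exact_mod_cast hk1
      have h2 : (0:ℝ) < Real.log (m + 2) := Real.log_pos (by push_cast; linarith [Nat.cast_nonneg (α := ℝ) m])
      rw [hM]; nlinarith
    calc f (3 ^ k * m) ≤ C * (k * Real.log 3 + Real.log (m + 2)) := hub
      _ ≤ C * (M * k) := mul_le_mul_of_nonneg_left hbound hC0
      _ = C * M * k := by ring
  -- lower bound via key
  have hlb := key m hml hfm k hk1
  -- 2^(2^k) ≥ k * 2^k
  have hnat : k * 2 ^ k ≤ 2 ^ 2 ^ k := by
    have h2k : 2 * k ≤ 2 ^ k := aux_two_mul_le_two_pow k hk1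
    calc k * 2 ^ k ≤ 2 ^ k * 2 ^ k :=
          Nat.mul_le_mul_right _ (Nat.lt_two_pow_self (n := k)).le
      _ = 2 ^ (2 * k) := by rw [two_mul, pow_add]
      _ ≤ 2 ^ 2 ^ k := Nat.pow_le_pow_right (by norm_num) h2k
  have hreal : (k : ℝ) * 2 ^ k ≤ 2 ^ 2 ^ k := by exact_mod_cast hnat
  -- final contradiction
  have hstrict : C * M * k < (1 / c) * 2 ^ 2 ^ k := by
    have hkpos : (0:ℝ) < k := by exact_mod_cast lt_of_lt_of_le one_pos hk1
    have h1 : C * M < 2 ^ k / c := by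
      rw [lt_div_iff₀ hc]
      nlinarith
    calc C * M * k < (2 ^ k / c) * k := by
          exact mul_lt_mul_of_pos_right h1 hkpos
      _ = (1 / c) * ((k:ℝ) * 2 ^ k) := by ring
      _ ≤ (1 / c) * 2 ^ 2 ^ k := by
          exact mul_le_mul_of_nonneg_left hreal (by positivity)
  linarith [le_trans hlb hub2]
end

section
/- Let a, b ∈ ℝ with a < b and let f : [a, b] → ℝ be monotone nondecreasing. Then f(b) − f(a) ≥ ∫_a^b D₊f(x) dx, where D₊f(x) := liminf_{ε↓0} (f(x+ε) − f(x))/ε is the lower-right Dini derivative, which is a measurable nonnegative function. -/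
open Filter

/-- The lower-right Dini derivative `D₊f(x) = liminf_{ε ↓ 0} (f(x+ε) - f(x))/ε`. -/
noncomputable def lowerRightDini (f : ℝ → ℝ) (x : ℝ) : ℝ :=
  Filter.liminf (fun ε : ℝ => (f (x + ε) - f x) / ε) (nhdsWithin 0 (Set.Ioi 0))

open MeasureTheory Set Topology in
theorem dini_fundamental_ineq (a b : ℝ) (hab : a < b) (f : ℝ → ℝ)
    (hf : MonotoneOn f (Set.Icc a b)) :
    (∀ x ∈ Set.Ico a b, 0 ≤ lowerRightDini f x) ∧
    ∫ x in a..b, lowerRightDini f x ≤ f b - f a := by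
  -- clamp f to a monotone function on all of ℝ
  set g : ℝ → ℝ := fun x => f (max a (min x b)) with hg_def
  have hmem : ∀ x : ℝ, max a (min x b) ∈ Icc a b := fun x =>
    ⟨le_max_left _ _, max_le hab.le (min_le_right _ _)⟩
  have hg : Monotone g := by
    intro x y hxy
    exact hf (hmem x) (hmem y) (max_le_max le_rfl (min_le_min_right b hxy))
  have hgeq : ∀ x ∈ Icc a b, g x = f x := by
    intro x hx
    simp only [hg_def]
    rw [min_eq_left hx.2, max_eq_right hx.1]
  -- eventual nonnegativity of the difference quotients
  have hquot : ∀ x ∈ Ico a b, ∀ᶠ ε in 𝓝[>] (0 : ℝ),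
      0 ≤ (f (x + ε) - f x) / ε := by
    intro x hx
    filter_upwards [Ioo_mem_nhdsGT_of_mem ⟨le_refl (0 : ℝ), sub_pos.2 hx.2⟩] with ε hε
    have hxm : x ∈ Icc a b := ⟨hx.1, hx.2.le⟩
    have hxem : x + ε ∈ Icc a b := ⟨le_add_of_le_of_nonneg hx.1 hε.1.le, by
      have := hε.2; linarith [hε.2]⟩
    have : f x ≤ f (x + ε) := hf hxm hxem (by linarith [hε.1])
    exact div_nonneg (by linarith) hε.1.le
  have part1 : ∀ x ∈ Ico a b, 0 ≤ lowerRightDini f x := by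
    intro x hx
    rw [lowerRightDini, liminf_eq]
    exact Real.sSup_nonneg' ⟨0, hquot x hx, le_rfl⟩
  refine ⟨part1, ?_⟩
  -- the Dini derivative equals the derivative of g where the latter exists
  have key : ∀ x ∈ Ico a b, ∀ d : ℝ, HasDerivAt g d x → lowerRightDini f x = d := by
    intro x hx d hd
    have h1 : Tendsto (fun y => (g y - g x) / (y - x)) (𝓝[>] x) (𝓝 d) := by
      have := (hasDerivAt_iff_tendsto_slope.1 hd).mono_left
        (nhdsWithin_mono x (fun y (hy : x < y) => ne_of_gt hy))
      apply this.congr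
      intro y
      simp [slope_def_field]
    have hmap : Tendsto (fun ε : ℝ => x + ε) (𝓝[>] (0 : ℝ)) (𝓝[>] x) := by
      apply tendsto_nhdsWithin_of_tendsto_nhds_of_eventually_within
      · have : Tendsto (fun ε : ℝ => x + ε) (𝓝 0) (𝓝 (x + 0)) :=
          tendsto_const_nhds.add tendsto_id
        simpa using this.mono_left nhdsWithin_le_nhds
      · filter_upwards [self_mem_nhdsWithin] with ε (hε : (0:ℝ) < ε)
        exact lt_add_of_pos_right x hε
    have h2 : Tendsto (fun ε : ℝ => (g (x + ε) - g x) / ε) (𝓝[>] (0 : ℝ)) (𝓝 d) := by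
      have := h1.comp hmap
      apply this.congr
      intro ε
      simp
    have h3 : Tendsto (fun ε : ℝ => (f (x + ε) - f x) / ε) (𝓝[>] (0 : ℝ)) (𝓝 d) := by
      apply h2.congr'
      filter_upwards [Ioo_mem_nhdsGT_of_mem ⟨le_refl (0 : ℝ), sub_pos.2 hx.2⟩] with ε hε
      have hxem : x + ε ∈ Icc a b := ⟨le_add_of_le_of_nonneg hx.1 hε.1.le, by linarith [hε.2]⟩
      rw [hgeq _ hxem, hgeq _ ⟨hx.1, hx.2.le⟩]
    exact h3.liminf_eq
  -- a.e. derivative of g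
  set μ := hg.stieltjesFunction.measure with hμ
  set D : ℝ → ℝ := fun x => (μ.rnDeriv volume x).toReal with hD
  have hae : ∀ᵐ x, HasDerivAt g (D x) x := hg.ae_hasDerivAt
  have haeb : ∀ᵐ x : ℝ, x ≠ b := by
    rw [ae_iff]
    simp
  have hcongr : ∀ᵐ x : ℝ, x ∈ Ioc a b → lowerRightDini f x = D x := by
    filter_upwards [hae, haeb] with x hx hxb hxm
    exact key x ⟨hxm.1.le, lt_of_le_of_ne hxm.2 hxb⟩ (D x) hx
  have hμfin : μ (Ioc a b) ≠ ⊤ := by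
    rw [hμ, StieltjesFunction.measure_Ioc]
    exact ENNReal.ofReal_ne_top
  rw [intervalIntegral.integral_of_le hab.le]
  calc ∫ x in Ioc a b, lowerRightDini f x
      = ∫ x in Ioc a b, D x := setIntegral_congr_ae measurableSet_Ioc hcongr
    _ ≤ (μ (Ioc a b)).toReal := Measure.setIntegral_toReal_rnDeriv_le hμfin
    _ ≤ f b - f a := by
        rw [hμ, StieltjesFunction.measure_Ioc]
        have hGb : hg.stieltjesFunction b = f b := by
          rw [hg.stieltjesFunction_eq]
          refine le_antisymm ?_ ?_
          · have h1 : Function.rightLim g b ≤ g (b + 1) := hg.rightLim_le (lt_add_one b)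
            have h2 : g (b + 1) = f b := by
              simp only [hg_def]
              rw [min_eq_right (by linarith : b ≤ b + 1), max_eq_right hab.le]
            linarith
          · have := hg.le_rightLim (le_refl b)
            rw [hgeq b ⟨hab.le, le_refl b⟩] at this
            exact this
        have hGa : f a ≤ hg.stieltjesFunction a := by
          rw [hg.stieltjesFunction_eq]
          have := hg.le_rightLim (le_refl a)
          rwa [hgeq a ⟨le_refl a, hab.le⟩] at this
        have hnn : 0 ≤ hg.stieltjesFunction b - hg.stieltjesFunction a :=
          sub_nonneg.2 (hg.stieltjesFunction.mono hab.le)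
        rw [ENNReal.toReal_ofReal hnn]
        linarith
end
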